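/- arXiv:1312.0069 — 7 statements merged into one kernel-verified Lean document; each statement's English description precedes it below -/
import Mathlib

section
/- Let d ≥ 1 and let σ be a skew bicharacter of ℤ^d. For all f, g ∈ ℓ¹(ℤ^d): the series ρ_σ(f) = ∑_{n∈ℤ^d} f(n) U_σ^n converges in operator norm on ℓ²(ℤ^d) with ‖ρ_σ(f)‖ ≤ ‖f‖₁; ρ_σ(f ⋆_σ g) = ρ_σ(f) ∘ ρ_σ(g); and ρ_σ(f*) = ρ_σ(f)*, where ρ_σ(f)* is the Hilbert space adjoint. -/
noncomputable section

/-- `ℤ^d`. -/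
abbrev Zd (d : ℕ) := Fin d → ℤ

/-- `ℓ²(ℤ^d)` with complex coefficients. -/
abbrev Hilb (d : ℕ) := lp (fun _ : Zd d => ℂ) 2

/-- `ℓ¹(ℤ^d)` with complex coefficients. -/
abbrev L1 (d : ℕ) := lp (fun _ : Zd d => ℂ) 1

/-- The canonical Hilbert basis vector `e_n` of `ℓ²(ℤ^d)`. -/
def eVec (d : ℕ) (n : Zd d) : Hilb d := lp.single 2 n 1

/-- A skew bicharacter of `ℤ^d`. -/
def IsSkewBichar (d : ℕ) (σ : Zd d → Zd d → ℂ) : Prop :=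
  (∀ x y, ‖σ x y‖ = 1) ∧
  (∀ x x' y, σ (x + x') y = σ x y * σ x' y) ∧
  (∀ x y y', σ x (y + y') = σ x y * σ x y') ∧
  (∀ x y, σ y x = starRingEnd ℂ (σ x y)) ∧
  (∀ x, σ x x = 1)

namespace Aux

variable {d : ℕ} {σ : Zd d → Zd d → ℂ}

lemma sig_ne (hσ : IsSkewBichar d σ) (x y : Zd d) : σ x y ≠ 0 := by
  intro h; have := hσ.1 x y; rw [h] at this; simp at this

lemma sig_zero_right (hσ : IsSkewBichar d σ) (x : Zd d) : σ x 0 = 1 := by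
  have h := hσ.2.2.1 x 0 0
  rw [add_zero] at h
  have := sig_ne hσ x 0
  field_simp at h
  tauto

lemma sig_zero_left (hσ : IsSkewBichar d σ) (y : Zd d) : σ 0 y = 1 := by
  have h := hσ.2.1 0 0 y
  rw [add_zero] at h
  have := sig_ne hσ 0 y
  field_simp at h
  tauto

lemma sig_mul_conj (hσ : IsSkewBichar d σ) (x y : Zd d) :
    σ x y * starRingEnd ℂ (σ x y) = 1 := by
  rw [Complex.mul_conj]
  norm_cast
  rw [← Complex.sq_norm]
  have := hσ.1 x y
  rw [this]; norm_num

lemma sig_neg_left (hσ : IsSkewBichar d σ) (x y : Zd d) : σ (-x) y = starRingEnd ℂ (σ x y) := by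
  have h := hσ.2.1 x (-x) y
  rw [add_neg_cancel, sig_zero_left hσ] at h
  have h2 := sig_mul_conj hσ x y
  have := sig_ne hσ x y
  rw [← h2] at h
  exact (mul_left_cancel₀ this h.symm)

lemma sig_neg_right (hσ : IsSkewBichar d σ) (x y : Zd d) : σ x (-y) = starRingEnd ℂ (σ x y) := by
  rw [hσ.2.2.2.1 (-y) x, sig_neg_left hσ, Complex.conj_conj, hσ.2.2.2.1]

lemma sig_sub_left (hσ : IsSkewBichar d σ) (k n : Zd d) : σ (k - n) n = σ k n := by
  rw [sub_eq_add_neg, hσ.2.1, sig_neg_left hσ, ← hσ.2.2.2.1, hσ.2.2.2.2, mul_one]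

lemma sig_add_left (hσ : IsSkewBichar d σ) (k n : Zd d) : σ (k + n) n = σ k n := by
  rw [hσ.2.1, hσ.2.2.2.2, mul_one]

lemma sig_add_right (hσ : IsSkewBichar d σ) (m k : Zd d) : σ m (m + k) = σ m k := by
  rw [hσ.2.2.1, hσ.2.2.2.2, one_mul]

lemma eVec_apply (n k : Zd d) : (eVec d n : ∀ _ : Zd d, ℂ) k = if k = n then 1 else 0 := by
  rw [eVec, lp.single_apply]
  split <;> simp_all

open scoped ComplexOrder in
lemma _dummy : True := trivial

lemma single_eq_smul (m : Zd d) (c : ℂ) : lp.single 2 m c = c • eVec d m := by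
  rw [eVec, ← lp.single_smul]
  simp

lemma hasSum_eVec (x : Hilb d) : HasSum (fun m => (x : ∀ _ : Zd d, ℂ) m • eVec d m) x := by
  have h := lp.hasSum_single (E := fun _ : Zd d => ℂ) (p := 2) (by norm_num) x
  simp only [single_eq_smul] at h
  exact h

lemma clm_ext {A B : Hilb d →L[ℂ] Hilb d} (h : ∀ m, A (eVec d m) = B (eVec d m)) : A = B := by
  apply ContinuousLinearMap.ext
  intro x
  have hA := (hasSum_eVec x).mapL A
  have hB := (hasSum_eVec x).mapL B
  simp only [map_smul] at hA hB
  simp only [h] at hA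
  exact hA.unique hB

lemma inner_apply_eVec (k : Zd d) (v : Hilb d) :
    (innerSL ℂ (eVec d k)) v = (v : ∀ _ : Zd d, ℂ) k := by
  have := lp.inner_single_left (𝕜 := ℂ) (G := fun _ : Zd d => ℂ) k (1 : ℂ) v
  simpa [eVec] using this

lemma coordU (hσ : IsSkewBichar d σ) {U : Zd d → (Hilb d →L[ℂ] Hilb d)}
    (hU : ∀ n m, U n (eVec d m) = σ m n • eVec d (m - n)) (n : Zd d) (x : Hilb d) (k : Zd d) :
    (U n x : ∀ _ : Zd d, ℂ) k = σ k n * x (k + n) := by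
  have h1 := (hasSum_eVec x).mapL (U n)
  simp only [map_smul, hU] at h1
  have h2 := h1.mapL (innerSL ℂ (eVec d k))
  simp only [map_smul, inner_apply_eVec, eVec_apply, smul_eq_mul] at h2
  have h3 : (fun m => (x : ∀ _ : Zd d, ℂ) m * (σ m n * if k = m - n then 1 else 0))
      = fun m => if m = k + n then σ k n * x (k + n) else 0 := by
    funext m
    by_cases hm : m = k + n
    · subst hm
      simp [sig_add_left hσ, mul_comm]
    · have : ¬ (k = m - n) := by
        intro hk
        exact hm (by rw [hk]; abel)
      simp [hm, this]
  rw [h3] at h2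
  exact ((hasSum_ite_eq (k + n) (σ k n * x (k + n))).unique h2).symm

lemma inner_U (hσ : IsSkewBichar d σ) {U : Zd d → (Hilb d →L[ℂ] Hilb d)}
    (hU : ∀ n m, U n (eVec d m) = σ m n • eVec d (m - n)) (n : Zd d) (x y : Hilb d) :
    (inner ℂ (U n x) (U n y) : ℂ) = inner ℂ x y := by
  rw [lp.inner_eq_tsum, lp.inner_eq_tsum]
  have h : ∀ k, (inner ℂ ((U n x : ∀ _ : Zd d, ℂ) k) ((U n y : ∀ _ : Zd d, ℂ) k) : ℂ)
      = inner ℂ ((x : ∀ _ : Zd d, ℂ) (k + n)) ((y : ∀ _ : Zd d, ℂ) (k + n)) := by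
    intro k
    rw [RCLike.inner_apply', RCLike.inner_apply', coordU hσ hU, coordU hσ hU, map_mul]
    calc (starRingEnd ℂ) (σ k n) * (starRingEnd ℂ) ((x : ∀ _ : Zd d, ℂ) (k + n)) *
          (σ k n * (y : ∀ _ : Zd d, ℂ) (k + n))
        = (σ k n * (starRingEnd ℂ) (σ k n)) *
          ((starRingEnd ℂ) ((x : ∀ _ : Zd d, ℂ) (k + n)) * (y : ∀ _ : Zd d, ℂ) (k + n)) := by ring
      _ = _ := by rw [sig_mul_conj hσ, one_mul]
  rw [tsum_congr h]
  exact (Equiv.addRight n).tsum_eq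
    (fun m => (inner ℂ ((x : ∀ _ : Zd d, ℂ) m) ((y : ∀ _ : Zd d, ℂ) m) : ℂ))

lemma norm_U (hσ : IsSkewBichar d σ) {U : Zd d → (Hilb d →L[ℂ] Hilb d)}
    (hU : ∀ n m, U n (eVec d m) = σ m n • eVec d (m - n)) (n : Zd d) (x : Hilb d) :
    ‖U n x‖ = ‖x‖ := by
  have h := inner_U hσ hU n x x
  rw [inner_self_eq_norm_sq_to_K, inner_self_eq_norm_sq_to_K] at h
  have h2 : ‖U n x‖ ^ 2 = ‖x‖ ^ 2 := by exact_mod_cast h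
  nlinarith [norm_nonneg (U n x), norm_nonneg x]

lemma normU_le (hσ : IsSkewBichar d σ) {U : Zd d → (Hilb d →L[ℂ] Hilb d)}
    (hU : ∀ n m, U n (eVec d m) = σ m n • eVec d (m - n)) (n : Zd d) : ‖U n‖ ≤ 1 :=
  (U n).opNorm_le_bound zero_le_one (fun x => by rw [norm_U hσ hU, one_mul])

lemma adjU (hσ : IsSkewBichar d σ) {U : Zd d → (Hilb d →L[ℂ] Hilb d)}
    (hU : ∀ n m, U n (eVec d m) = σ m n • eVec d (m - n)) (n : Zd d) :
    ContinuousLinearMap.adjoint (U n) = U (-n) := by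
  symm
  rw [ContinuousLinearMap.eq_adjoint_iff]
  intro x y
  rw [lp.inner_eq_tsum, lp.inner_eq_tsum]
  rw [← (Equiv.subRight n).tsum_eq
    (fun k => (inner ℂ ((x : ∀ _ : Zd d, ℂ) k) ((U n y : ∀ _ : Zd d, ℂ) k) : ℂ))]
  apply tsum_congr
  intro k
  show (inner ℂ ((U (-n) x : ∀ _ : Zd d, ℂ) k) ((y : ∀ _ : Zd d, ℂ) k) : ℂ)
      = inner ℂ ((x : ∀ _ : Zd d, ℂ) (k - n)) ((U n y : ∀ _ : Zd d, ℂ) (k - n))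
  rw [RCLike.inner_apply', RCLike.inner_apply', coordU hσ hU, coordU hσ hU,
    sub_add_cancel, sig_sub_left hσ, ← sub_eq_add_neg, sig_neg_right hσ, map_mul,
    Complex.conj_conj]
  ring

lemma compU (hσ : IsSkewBichar d σ) {U : Zd d → (Hilb d →L[ℂ] Hilb d)}
    (hU : ∀ n m, U n (eVec d m) = σ m n • eVec d (m - n)) (a b : Zd d) :
    (U a).comp (U b) = σ a b • U (a + b) := by
  apply clm_ext
  intro m
  simp only [ContinuousLinearMap.comp_apply, hU, map_smul, ContinuousLinearMap.smul_apply]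
  have hidx : m - b - a = m - (a + b) := by abel
  rw [smul_smul, smul_smul, hidx]
  congr 1
  have h1 : σ (m - b) a = σ m a * σ a b := by
    rw [sub_eq_add_neg, hσ.2.1, sig_neg_left hσ, ← hσ.2.2.2.1]
  rw [h1, hσ.2.2.1]
  ring

lemma summable_coeff (f : L1 d) : Summable (fun n => ‖(f : ∀ _ : Zd d, ℂ) n‖) := by
  have h := lp.memℓp f
  rw [memℓp_gen_iff (by norm_num : 0 < (1 : ENNReal).toReal)] at h
  simpa using h

lemma norm_L1 (f : L1 d) : ‖f‖ = ∑' n, ‖(f : ∀ _ : Zd d, ℂ) n‖ := by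
  rw [lp.norm_eq_tsum_rpow (by norm_num) f]
  simp [Real.rpow_one]

lemma summable_ops (hσ : IsSkewBichar d σ) {U : Zd d → (Hilb d →L[ℂ] Hilb d)}
    (hU : ∀ n m, U n (eVec d m) = σ m n • eVec d (m - n)) (f : L1 d) :
    Summable (fun n => (f : ∀ _ : Zd d, ℂ) n • U n) := by
  apply Summable.of_norm_bounded (summable_coeff f)
  intro n
  refine (norm_smul_le ((f : ∀ _ : Zd d, ℂ) n) (U n)).trans ?_
  calc ‖(f : ∀ _ : Zd d, ℂ) n‖ * ‖U n‖ ≤ ‖(f : ∀ _ : Zd d, ℂ) n‖ * 1 :=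
        mul_le_mul_of_nonneg_left (normU_le hσ hU n) (norm_nonneg _)
    _ = _ := mul_one _

end Aux

open Aux

set_option maxHeartbeats 1000000
set_option synthInstance.maxHeartbeats 400000

/-- For `f ∈ ℓ¹(ℤ^d)`, the series `ρ_σ(f) = ∑_n f(n) U_σ^n` converges in operator norm
with `‖ρ_σ(f)‖ ≤ ‖f‖₁`, `ρ_σ` sends twisted convolution to composition, and it sends the
`ℓ¹`-adjoint to the Hilbert space adjoint. -/
theorem stmt1 (d : ℕ) (hd : 1 ≤ d) (σ : Zd d → Zd d → ℂ) (hσ : IsSkewBichar d σ)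
    (U : Zd d → (Hilb d →L[ℂ] Hilb d))
    (hU : ∀ n m, U n (eVec d m) = σ m n • eVec d (m - n)) :
    ∃ ρ : L1 d → (Hilb d →L[ℂ] Hilb d),
      (∀ f : L1 d, HasSum (fun n : Zd d => f n • U n) (ρ f)) ∧
      (∀ f : L1 d, ‖ρ f‖ ≤ ‖f‖) ∧
      (∀ f g fg : L1 d,
        (∀ n : Zd d, fg n = ∑' m : Zd d, f m * g (n - m) * σ m n) →
          ρ fg = (ρ f).comp (ρ g)) ∧
      (∀ f fs : L1 d,
        (∀ n : Zd d, fs n = starRingEnd ℂ (f (-n))) →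
          ρ fs = ContinuousLinearMap.adjoint (ρ f)) := by
  classical
  refine ⟨fun f => ∑' n, f n • U n, fun f => (summable_ops hσ hU f).hasSum, ?_, ?_, ?_⟩
  · -- norm bound
    intro f
    have hb : ∀ n : Zd d, ‖f n • U n‖ ≤ ‖f n‖ := by
      intro n
      refine (norm_smul_le (f n) (U n)).trans ?_
      calc ‖f n‖ * ‖U n‖ ≤ ‖f n‖ * 1 :=
            mul_le_mul_of_nonneg_left (normU_le hσ hU n) (norm_nonneg _)
        _ = _ := mul_one _
    have hs : Summable (fun n => ‖f n • U n‖) :=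
      Summable.of_nonneg_of_le (fun n => norm_nonneg _) hb (summable_coeff f)
    calc ‖∑' n, f n • U n‖ ≤ ∑' n, ‖f n • U n‖ := norm_tsum_le_tsum_norm hs
      _ ≤ ∑' n, ‖f n‖ := Summable.tsum_le_tsum hb hs (summable_coeff f)
      _ = ‖f‖ := (norm_L1 f).symm
  · -- multiplicativity
    intro f g fg hfg
    set F : Zd d × Zd d → (Hilb d →L[ℂ] Hilb d) :=
      fun p => (f p.1 * g p.2 * σ p.1 p.2) • U (p.1 + p.2) with hFdef
    have hFsum : Summable F := by
      apply Summable.of_norm_bounded (g := fun p : Zd d × Zd d => ‖f p.1‖ * ‖g p.2‖)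
        ((summable_coeff f).mul_of_nonneg (summable_coeff g)
          (fun _ => norm_nonneg _) (fun _ => norm_nonneg _))
      intro p
      simp only [hFdef]
      refine (norm_smul_le (f p.1 * g p.2 * σ p.1 p.2) (U (p.1 + p.2))).trans ?_
      rw [norm_mul, norm_mul, hσ.1, mul_one]
      calc ‖f p.1‖ * ‖g p.2‖ * ‖U (p.1 + p.2)‖ ≤ ‖f p.1‖ * ‖g p.2‖ * 1 :=
            mul_le_mul_of_nonneg_left (normU_le hσ hU _) (by positivity)
        _ = _ := mul_one _
    have hT := hFsum.hasSum
    have hcomp : ∀ m : Zd d, HasSum (fun n => F (m, n)) ((f m • U m).comp (∑' n, g n • U n)) := by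
      intro m
      have h1 := ((summable_ops hσ hU g).hasSum).mapL
        ((ContinuousLinearMap.compL ℂ (Hilb d) (Hilb d) (Hilb d)) (f m • U m))
      have h2 : ∀ n : Zd d,
          (ContinuousLinearMap.compL ℂ (Hilb d) (Hilb d) (Hilb d)) (f m • U m) (g n • U n)
            = F (m, n) := by
        intro n
        show (f m • U m).comp (g n • U n) = _
        rw [ContinuousLinearMap.smul_comp, ContinuousLinearMap.comp_smul, compU hσ hU,
          smul_smul, smul_smul]
      simp only [h2] at h1
      exact h1
    have hT1 : HasSum (fun m => (f m • U m).comp (∑' n, g n • U n)) (∑' p, F p) :=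
      hT.prod_fiberwise hcomp
    have hT2 : HasSum (fun m => (f m • U m).comp (∑' n, g n • U n))
        ((∑' m, f m • U m).comp (∑' n, g n • U n)) := by
      have h1 := ((summable_ops hσ hU f).hasSum).mapL
        (((ContinuousLinearMap.compL ℂ (Hilb d) (Hilb d) (Hilb d)).flip) (∑' n, g n • U n))
      exact h1
    have hTeq : (∑' p, F p) = (∑' m, f m • U m).comp (∑' n, g n • U n) := hT1.unique hT2
    let e : (Zd d × Zd d) ≃ (Zd d × Zd d) :=
      ⟨fun p => (p.2, p.1 - p.2), fun p => (p.1 + p.2, p.1),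
        fun p => by
          obtain ⟨a, b⟩ := p
          have h : b + (a - b) = a := by abel
          simp [h],
        fun p => by
          obtain ⟨a, b⟩ := p
          have h : a + b - a = b := by abel
          simp [h]⟩
    have hTe : HasSum (F ∘ e) (∑' p, F p) := (e.hasSum_iff).2 hT
    have hTe' : HasSum (fun p : Zd d × Zd d => (f p.2 * g (p.1 - p.2) * σ p.2 p.1) • U p.1)
        (∑' p, F p) := by
      have hfe : (F ∘ e)
          = fun p : Zd d × Zd d => (f p.2 * g (p.1 - p.2) * σ p.2 p.1) • U p.1 := by
        funext p
        show (f p.2 * g (p.1 - p.2) * σ p.2 (p.1 - p.2)) • U (p.2 + (p.1 - p.2)) = _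
        have h1 : p.2 + (p.1 - p.2) = p.1 := by abel
        have h2 : σ p.2 (p.1 - p.2) = σ p.2 p.1 := by
          conv_rhs => rw [← h1]
          rw [sig_add_right hσ]
        rw [h1, h2]
      rwa [hfe] at hTe
    have hinner : ∀ k : Zd d,
        HasSum (fun m => (f m * g (k - m) * σ m k) • U k) (fg k • U k) := by
      intro k
      have hsummable : Summable (fun m => f m * g (k - m) * σ m k) := by
        apply Summable.of_norm_bounded (g := fun m => ‖f m‖ * ‖g‖)
          ((summable_coeff f).mul_right ‖g‖)
        intro m
        rw [norm_mul, norm_mul, hσ.1, mul_one]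
        exact mul_le_mul_of_nonneg_left
          (lp.norm_apply_le_norm one_ne_zero g (k - m)) (norm_nonneg _)
      have h1 := hsummable.hasSum.smul_const (U k)
      rw [← hsummable.hasSum.tsum_eq, ← hfg k] at h1
      exact h1
    have hT3 : HasSum (fun k => fg k • U k) (∑' p, F p) := hTe'.prod_fiberwise hinner
    exact ((summable_ops hσ hU fg).hasSum.unique hT3).trans hTeq
  · -- adjoint
    intro f fs hfs
    have h1 := (summable_ops hσ hU f).hasSum
    have h2 : HasSum (fun n => ContinuousLinearMap.adjoint (f n • U n))
        (ContinuousLinearMap.adjoint (∑' n, f n • U n)) := by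
      refine h1.map (AddMonoidHom.mk' (fun A => ContinuousLinearMap.adjoint A) ?_) ?_
      · intro A B
        exact map_add _ A B
      · exact (ContinuousLinearMap.adjoint :
          (Hilb d →L[ℂ] Hilb d) ≃ₗᵢ⋆[ℂ] (Hilb d →L[ℂ] Hilb d)).continuous
    have h3 : ∀ n : Zd d, ContinuousLinearMap.adjoint (f n • U n)
        = starRingEnd ℂ (f n) • U (-n) := by
      intro n
      rw [map_smulₛₗ, adjU hσ hU]
    simp only [h3] at h2
    have h4 : HasSum (fun n => starRingEnd ℂ (f (-n)) • U n)
        (ContinuousLinearMap.adjoint (∑' n, f n • U n)) := by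
      rw [← (Equiv.neg (Zd d)).hasSum_iff]
      have : ((fun n => starRingEnd ℂ (f (-n)) • U n) ∘ (Equiv.neg (Zd d)))
          = fun n => starRingEnd ℂ (f n) • U (-n) := by
        funext n
        simp [Equiv.neg]
      rw [this]
      exact h2
    have h5 : (fun n : Zd d => fs n • U n) = fun n => starRingEnd ℂ (f (-n)) • U n := by
      funext n
      rw [hfs n]
    exact ((summable_ops hσ hU fs).hasSum).unique (h5 ▸ h4)
end
end

section
/- Let d ≥ 1 and let σ be a skew bicharacter of ℤ^d. The map ρ_σ : ℓ¹(ℤ^d) → B(ℓ²(ℤ^d)) given by ρ_σ(f) = ∑_{n∈ℤ^d} f(n) U_σ^n is injective: if f ∈ ℓ¹(ℤ^d) and ρ_σ(f) = 0, then f = 0. -/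
noncomputable section

/-- The map `ρ_σ : ℓ¹(ℤ^d) → B(ℓ²(ℤ^d))`, `ρ_σ(f) = ∑_n f(n) U_σ^n`, is injective:
if the series sums to the zero operator, then `f = 0`. -/
theorem stmt2 (d : ℕ) (hd : 1 ≤ d) (σ : Zd d → Zd d → ℂ) (hσ : IsSkewBichar d σ)
    (U : Zd d → (Hilb d →L[ℂ] Hilb d))
    (hU : ∀ n m, U n (eVec d m) = σ m n • eVec d (m - n)) :
    ∀ f : L1 d, HasSum (fun n : Zd d => f n • U n) 0 → f = 0 := by
  intro f hf
  -- σ 0 n = 1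
  have hσ0 : ∀ n, σ 0 n = 1 := by
    intro n
    have h := hσ.2.1 0 0 n
    have hne : σ 0 n ≠ 0 := by
      intro h0; have := hσ.1 0 n; rw [h0] at this; simp at this
    have : σ 0 n * σ 0 n = σ 0 n * 1 := by
      rw [mul_one]; simpa using h.symm
    exact (mul_left_cancel₀ hne this)
  -- evaluate at eVec d 0
  have h1 : HasSum (fun n : Zd d => f n • eVec d (-n)) (0 : Hilb d) := by
    have := hf.mapL (ContinuousLinearMap.apply ℂ (Hilb d) (eVec d 0))
    simp only [ContinuousLinearMap.apply_apply, ContinuousLinearMap.smul_apply,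
      ContinuousLinearMap.zero_apply, map_zero] at this
    convert this using 2 with n
    rw [hU, hσ0, one_smul, zero_sub]
  ext m
  -- pair with eVec d (-m)
  have h2 := h1.mapL (innerSL ℂ (eVec d (-m)))
  simp only [map_zero, innerSL_apply_apply, inner_smul_right] at h2
  have h3 : HasSum (fun n : Zd d => if n = m then f m else 0) (0 : ℂ) := by
    convert h2 using 2 with n
    case e'_3 => rfl
    rw [eVec, eVec, lp.inner_single_left]
    by_cases h : n = m
    · subst h
      simp [lp.single_apply_self]
    · have hne : -m ≠ -n := fun hc => h (neg_injective hc).symm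
      rw [lp.single_apply_ne _ _ _ hne]
      simp [h]
  have := (hasSum_ite_eq m (f m)).unique h3
  simpa using this
end
end

section
/- Let d ≥ 1, let k : {1,…,d} → ℕ be a multi-index, and let σ be a skew bicharacter of ℤ^d such that σ(h,y) = 1 whenever h ∈ H_k and y ∈ ℤ^d. Let N, M ≥ 1 be integers such that every n ∈ ℤ^d with |n| ≤ N+M belongs to I_k. Let ω_{N,M} be the diagonal operator on ℓ²(ℤ^d) with ω_{N,M} e_n = w_{N,M}(n) e_n for all n ∈ ℤ^d. Then ω_{N,M} is a finite rank operator, and for every m ∈ I_k the commutator satisfies ‖ω_{N,M} ∘ S_{k,σ,m} − S_{k,σ,m} ∘ ω_{N,M}‖ ≤ |m|/M in operator norm. -/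
noncomputable section

/-- `H_k = k ℤ^d`, with the convention that `k i = 0` encodes `∞` (so `∞ℤ = {0}`). -/
def Hset (d : ℕ) (k : Fin d → ℕ) : Set (Zd d) :=
  {x | ∀ i, (k i : ℤ) ∣ x i}

/-- The centered fundamental domain `I_k` (no constraint on a coordinate when `k i = 0`). -/
def Iset (d : ℕ) (k : Fin d → ℕ) : Set (Zd d) :=
  {x | ∀ i, k i = 0 ∨
    (Int.fdiv (1 - (k i : ℤ)) 2 ≤ x i ∧ x i ≤ Int.fdiv ((k i : ℤ) - 1) 2)}

/-- The `ℓ¹` length `|x| = ∑_i |x_i|` on `ℤ^d`. -/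
def len (d : ℕ) (x : Zd d) : ℤ := ∑ i, |x i|

/-- The weight `w_{N,M}`. -/
def wgt (d N M : ℕ) (x : Zd d) : ℝ :=
  if len d x ≤ (N : ℤ) then 1
  else if len d x ≤ (N : ℤ) + (M : ℤ) then ((M : ℝ) + (N : ℝ) - (len d x : ℝ)) / (M : ℝ)
  else 0

/-! ### Auxiliary lemmas -/

lemma coord_abs_le (k : ℕ) (a h : ℤ)
    (ha : k = 0 ∨ (Int.fdiv (1 - (k:ℤ)) 2 ≤ a ∧ a ≤ Int.fdiv ((k:ℤ) - 1) 2))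
    (hh : (k:ℤ) ∣ h) : |a| ≤ |a + h| := by
  by_cases hk0 : k = 0
  · subst hk0
    have : h = 0 := by simpa using hh
    simp [this]
  · have hk : 1 ≤ (k:ℤ) := by exact_mod_cast Nat.one_le_iff_ne_zero.mpr hk0
    rcases ha with h0 | ⟨h1, h2⟩
    · exact absurd h0 hk0
    rw [Int.fdiv_eq_ediv_of_nonneg _ (by norm_num)] at h1 h2
    have hb1 : -(k:ℤ) ≤ 2*a := by omega
    have hb2 : 2*a ≤ (k:ℤ) - 1 := by omega
    obtain ⟨t, rfl⟩ := hh
    rcases lt_trichotomy t 0 with ht | rfl | ht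
    · have hkt : (k:ℤ)*t ≤ -k := by nlinarith
      rcases abs_cases a with ⟨e1, _⟩ | ⟨e1, _⟩ <;>
        rcases abs_cases (a + (k:ℤ)*t) with ⟨e2, f2⟩ | ⟨e2, f2⟩ <;> linarith
    · simp
    · have hkt : (k:ℤ) ≤ k*t := by nlinarith
      rcases abs_cases a with ⟨e1, _⟩ | ⟨e1, _⟩ <;>
        rcases abs_cases (a + (k:ℤ)*t) with ⟨e2, f2⟩ | ⟨e2, f2⟩ <;> linarith

lemma coord_eq (k : ℕ) (a b : ℤ)
    (ha : k = 0 ∨ (Int.fdiv (1 - (k:ℤ)) 2 ≤ a ∧ a ≤ Int.fdiv ((k:ℤ) - 1) 2))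
    (hb : k = 0 ∨ (Int.fdiv (1 - (k:ℤ)) 2 ≤ b ∧ b ≤ Int.fdiv ((k:ℤ) - 1) 2))
    (hab : (k:ℤ) ∣ (a - b)) : a = b := by
  by_cases hk0 : k = 0
  · subst hk0
    have : a - b = 0 := by simpa using hab
    omega
  · have hk : 1 ≤ (k:ℤ) := by exact_mod_cast Nat.one_le_iff_ne_zero.mpr hk0
    rcases ha with h0 | ⟨h1, h2⟩; · exact absurd h0 hk0
    rcases hb with h0 | ⟨h3, h4⟩; · exact absurd h0 hk0
    rw [Int.fdiv_eq_ediv_of_nonneg _ (by norm_num)] at h1 h2 h3 h4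
    have hb1 : -(k:ℤ) ≤ 2*a := by omega
    have hb2 : 2*a ≤ (k:ℤ) - 1 := by omega
    have hb3 : -(k:ℤ) ≤ 2*b := by omega
    have hb4 : 2*b ≤ (k:ℤ) - 1 := by omega
    obtain ⟨t, hket⟩ := hab
    rcases lt_trichotomy t 0 with ht | rfl | ht
    · have : (k:ℤ)*t ≤ -k := by nlinarith
      linarith
    · omega
    · have : (k:ℤ) ≤ k*t := by nlinarith
      linarith

lemma len_nonneg (d : ℕ) (x : Zd d) : 0 ≤ len d x :=
  Finset.sum_nonneg fun i _ => abs_nonneg _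

lemma len_add_le (d : ℕ) (x y : Zd d) : len d (x + y) ≤ len d x + len d y := by
  rw [len, len, len, ← Finset.sum_add_distrib]
  exact Finset.sum_le_sum fun i _ => abs_add_le _ _

lemma len_sub_le (d : ℕ) (x y : Zd d) : len d (x - y) ≤ len d x + len d y := by
  rw [len, len, len, ← Finset.sum_add_distrib]
  exact Finset.sum_le_sum fun i _ => abs_sub _ _

lemma Hset_add {d : ℕ} {k : Fin d → ℕ} {x y : Zd d} (hx : x ∈ Hset d k)
    (hy : y ∈ Hset d k) : x + y ∈ Hset d k := fun i => dvd_add (hx i) (hy i)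

lemma Hset_neg {d : ℕ} {k : Fin d → ℕ} {x : Zd d} (hx : x ∈ Hset d k) :
    -x ∈ Hset d k := fun i => (hx i).neg_right

lemma Iset_eq {d : ℕ} {k : Fin d → ℕ} {a b : Zd d} (ha : a ∈ Iset d k)
    (hb : b ∈ Iset d k) (hab : a - b ∈ Hset d k) : a = b :=
  funext fun i => coord_eq (k i) (a i) (b i) (ha i) (hb i) (hab i)

lemma len_I_le {d : ℕ} {k : Fin d → ℕ} {a h : Zd d} (ha : a ∈ Iset d k)
    (hh : h ∈ Hset d k) : len d a ≤ len d (a + h) :=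
  Finset.sum_le_sum fun i _ => coord_abs_le (k i) (a i) (h i) (ha i) (hh i)

lemma wgt_clamp (d N M : ℕ) (hM : 1 ≤ M) (x : Zd d) :
    wgt d N M x = max 0 (min 1 (((N : ℝ) + (M : ℝ) - (len d x : ℝ)) / (M : ℝ))) := by
  have hM0 : (0:ℝ) < M := by exact_mod_cast hM
  unfold wgt
  split_ifs with h1 h2
  · have hl : (len d x : ℝ) ≤ (N : ℝ) := by exact_mod_cast h1
    have : (1:ℝ) ≤ ((N : ℝ) + (M : ℝ) - (len d x : ℝ)) / (M : ℝ) := by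
      rw [le_div_iff₀ hM0]; linarith
    rw [min_eq_left this, max_eq_right zero_le_one]
  · have hl : (len d x : ℝ) ≤ (N : ℝ) + (M : ℝ) := by exact_mod_cast h2
    have hl2 : (N : ℝ) < (len d x : ℝ) := by exact_mod_cast not_le.mp h1
    have hc1 : ((N : ℝ) + (M : ℝ) - (len d x : ℝ)) / (M : ℝ) ≤ 1 := by
      rw [div_le_one hM0]; linarith
    have hc0 : 0 ≤ ((N : ℝ) + (M : ℝ) - (len d x : ℝ)) / (M : ℝ) := by
      apply div_nonneg _ hM0.le; linarith
    rw [min_eq_right hc1, max_eq_right hc0]; ring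
  · have hl : (N : ℝ) + (M : ℝ) < (len d x : ℝ) := by exact_mod_cast not_le.mp h2
    have hc : ((N : ℝ) + (M : ℝ) - (len d x : ℝ)) / (M : ℝ) ≤ 0 := by
      apply div_nonpos_of_nonpos_of_nonneg _ hM0.le; linarith
    rw [min_eq_right (hc.trans zero_le_one), max_eq_left hc]

lemma clamp_lip (a b : ℝ) : |max 0 (min 1 a) - max 0 (min 1 b)| ≤ |a - b| := by
  rw [max_comm 0 (min 1 a), max_comm 0 (min 1 b)]
  refine (abs_max_sub_max_le_abs _ _ _).trans ?_
  have := abs_min_sub_min_le_max 1 a 1 b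
  simpa using this

lemma wgt_lip (d N M : ℕ) (hM : 1 ≤ M) (x y : Zd d) :
    |wgt d N M x - wgt d N M y| ≤ |(len d x : ℝ) - (len d y : ℝ)| / (M : ℝ) := by
  have hM0 : (0:ℝ) < M := by exact_mod_cast hM
  rw [wgt_clamp d N M hM x, wgt_clamp d N M hM y]
  refine (clamp_lip _ _).trans ?_
  rw [div_sub_div_same, abs_div, abs_of_pos hM0]
  apply le_of_eq; congr 1
  have h : ((N : ℝ) + (M : ℝ) - (len d x : ℝ)) - ((N : ℝ) + (M : ℝ) - (len d y : ℝ))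
      = (len d y : ℝ) - (len d x : ℝ) := by ring
  rw [h, abs_sub_comm]

lemma wgt_zero (d N M : ℕ) (x : Zd d) (h : (N : ℤ) + (M : ℤ) < len d x) :
    wgt d N M x = 0 := by
  unfold wgt
  split_ifs with h1 h2 <;> first | rfl | omega

lemma norm_sq_sum_orthonormal {ι E : Type*} [NormedAddCommGroup E]
    [InnerProductSpace ℂ E] {u : ι → E} (hu : Orthonormal ℂ u) (s : Finset ι)
    (a : ι → ℂ) : ‖∑ i ∈ s, a i • u i‖ ^ 2 = ∑ i ∈ s, ‖a i‖ ^ 2 := by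
  have h := hu.inner_sum a a s
  rw [inner_self_eq_norm_sq_to_K] at h
  have h3 : ∑ i ∈ s, (starRingEnd ℂ) (a i) * a i = ∑ i ∈ s, ((‖a i‖ : ℝ) : ℂ) ^ 2 :=
    Finset.sum_congr rfl fun i _ => RCLike.conj_mul (a i)
  have h4 : ((‖∑ i ∈ s, a i • u i‖ ^ 2 : ℝ) : ℂ) = ((∑ i ∈ s, ‖a i‖ ^ 2 : ℝ) : ℂ) := by
    push_cast
    exact h.trans h3
  exact_mod_cast h4

lemma eVec_orthonormal (d : ℕ) : Orthonormal ℂ (eVec d) := by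
  rw [orthonormal_iff_ite]
  intro i j
  unfold eVec
  rw [lp.inner_single_left]
  simp [lp.single_apply, Pi.single_apply, eq_comm]

lemma single_eq_smul (d : ℕ) (n : Zd d) (c : ℂ) :
    lp.single (E := fun _ : Zd d => ℂ) 2 n c = c • eVec d n := by
  unfold eVec
  rw [← lp.single_smul]
  norm_num

set_option maxHeartbeats 1000000 in
/-- The diagonal pivot `ω_{N,M}` is a finite rank operator, and for every `m ∈ I_k` the
commutator with the twisted shift `S_{k,σ,m}` has operator norm at most `|m|/M`. -/
theorem stmt10 (d : ℕ) (hd : 1 ≤ d) (k : Fin d → ℕ)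
    (σ : Zd d → Zd d → ℂ) (hσ : IsSkewBichar d σ)
    (hσH : ∀ h ∈ Hset d k, ∀ y : Zd d, σ h y = 1)
    (N M : ℕ) (hN : 1 ≤ N) (hM : 1 ≤ M)
    (hNM : ∀ n : Zd d, len d n ≤ (N : ℤ) + (M : ℤ) → n ∈ Iset d k)
    (r : Zd d → Zd d)
    (hr : ∀ n : Zd d, r n ∈ Iset d k ∧ n - r n ∈ Hset d k)
    (m : Zd d) (hm : m ∈ Iset d k)
    (W : Hilb d →L[ℂ] Hilb d)
    (hW : ∀ n : Zd d, W (eVec d n) = (wgt d N M n : ℂ) • eVec d n)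
    (S : Hilb d →L[ℂ] Hilb d)
    (hS : ∀ x : Zd d, S (eVec d x) = σ x m • eVec d (r (x - m) + (x - r x))) :
    FiniteDimensional ℂ (LinearMap.range (W : Hilb d →ₗ[ℂ] Hilb d)) ∧
    ‖W.comp S - S.comp W‖ ≤ (len d m : ℝ) / (M : ℝ) := by
  have hM0 : (0:ℝ) < M := by exact_mod_cast hM
  have hrI : ∀ x, r x ∈ Iset d k := fun x => (hr x).1
  have hrH : ∀ x, x - r x ∈ Hset d k := fun x => (hr x).2
  have r_congr : ∀ x y : Zd d, x - y ∈ Hset d k → r x = r y := by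
    intro x y hxy
    refine Iset_eq (hrI x) (hrI y) ?_
    have h : r x - r y = -(x - r x) + ((x - y) + (y - r y)) := by ring
    rw [h]
    exact Hset_add (Hset_neg (hrH x)) (Hset_add hxy (hrH y))
  have r_self : ∀ x : Zd d, x ∈ Iset d k → r x = x := by
    intro x hx
    refine Iset_eq (hrI x) hx ?_
    have h : r x - x = -(x - r x) := by ring
    rw [h]; exact Hset_neg (hrH x)
  set T : Zd d → Zd d := fun x => r (x - m) + (x - r x) with hT
  have hTeq : ∀ x : Zd d, r (x - m) + (x - r x) = T x := fun x => by simp only [hT]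
  have hTH : ∀ x, T x - (x - m) ∈ Hset d k := by
    intro x
    have h : T x - (x - m) = -((x - m) - r (x - m)) + (x - r x) := by
      simp only [hT]; ring
    rw [h]
    exact Hset_add (Hset_neg (hrH (x - m))) (hrH x)
  have Tinj : Function.Injective T := by
    have recover : ∀ x, (T x - r (T x)) + r (r (T x) + m) = x := by
      intro x
      have h1 : r (T x) = r (x - m) := r_congr _ _ (hTH x)
      have h2 : r (r (x - m) + m) = r x := by
        apply r_congr
        have h : (r (x - m) + m) - x = -((x - m) - r (x - m)) := by ring
        rw [h]; exact Hset_neg (hrH (x - m))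
      rw [h1, h2]
      simp only [hT]; ring
    intro x y hxy
    rw [← recover x, ← recover y, hxy]
  -- the key weight estimate
  have key : ∀ x : Zd d, |wgt d N M (T x) - wgt d N M x| ≤ (len d m : ℝ) / M := by
    intro x
    by_cases hcase : len d x ≤ (N:ℤ) + M ∨ len d (T x) ≤ (N:ℤ) + M
    · have hrx : r x = x := by
        rcases hcase with h | h
        · exact r_self x (hNM x h)
        · have h1 : r (T x) = T x := r_self _ (hNM _ h)
          have h2 : r (T x) = r (x - m) := r_congr _ _ (hTH x)
          have h4 : T x = r (x - m) := h1.symm.trans h2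
          have h5 : r (x - m) + (x - r x) = r (x - m) := (hTeq x).trans h4
          have h6 : x - r x = 0 := by
            have := add_eq_left.mp h5
            exact this
          exact (sub_eq_zero.mp h6).symm
      have hTx : T x = r (x - m) := by
        rw [← hTeq x, hrx, sub_self, add_zero]
      have hxI : x ∈ Iset d k := by
        have := hrI x; rwa [hrx] at this
      have h1 : len d (T x) ≤ len d x + len d m := by
        rw [hTx]
        have e : r (x - m) + ((x - m) - r (x - m)) = x - m := by ring
        calc len d (r (x - m)) ≤ len d (r (x - m) + ((x - m) - r (x - m))) :=
              len_I_le (hrI _) (hrH _)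
          _ = len d (x - m) := by rw [e]
          _ ≤ len d x + len d m := len_sub_le d x m
      have h2 : len d x ≤ len d (T x) + len d m := by
        have hmem : (T x + m) - x ∈ Hset d k := by
          have e : (T x + m) - x = T x - (x - m) := by ring
          rw [e]; exact hTH x
        have e2 : x + ((T x + m) - x) = T x + m := by ring
        calc len d x ≤ len d (x + ((T x + m) - x)) := len_I_le hxI hmem
          _ = len d (T x + m) := by rw [e2]
          _ ≤ len d (T x) + len d m := len_add_le d _ m
      refine (wgt_lip d N M hM (T x) x).trans ?_
      gcongr
      have hz : |len d (T x) - len d x| ≤ len d m := by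
        rw [abs_le]; constructor <;> linarith
      exact_mod_cast hz
    · push_neg at hcase
      rw [wgt_zero d N M _ hcase.2, wgt_zero d N M _ hcase.1]
      simp only [sub_zero, abs_zero]
      exact div_nonneg (by exact_mod_cast len_nonneg d m) hM0.le
  -- coefficients of the commutator
  set c : Zd d → ℂ :=
    fun x => σ x m * ((wgt d N M (T x) : ℂ) - (wgt d N M x : ℂ)) with hc
  have hcb : ∀ x, ‖c x‖ ≤ (len d m : ℝ) / M := by
    intro x
    simp only [hc]
    rw [norm_mul, hσ.1, one_mul]
    have e : ((wgt d N M (T x) : ℂ) - (wgt d N M x : ℂ))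
        = ((wgt d N M (T x) - wgt d N M x : ℝ) : ℂ) := by push_cast; ring
    rw [e, Complex.norm_real, Real.norm_eq_abs]
    exact key x
  set D := W.comp S - S.comp W with hD
  have hDe : ∀ x : Zd d, D (eVec d x) = c x • eVec d (T x) := by
    intro x
    have hA : W (S (eVec d x)) = (σ x m * (wgt d N M (T x) : ℂ)) • eVec d (T x) := by
      rw [hS, map_smul, hTeq, hW, smul_smul]
    have hB : S (W (eVec d x)) = ((wgt d N M x : ℂ) * σ x m) • eVec d (T x) := by
      rw [hW, map_smul, hS, hTeq, smul_smul]
    have e1 : D (eVec d x) = W (S (eVec d x)) - S (W (eVec d x)) := rfl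
    rw [e1, hA, hB, ← sub_smul]
    congr 1
    simp only [hc]; ring
  -- partial sums converge
  have hf' : ∀ f : Hilb d, Filter.Tendsto
      (fun s : Finset (Zd d) => ∑ n ∈ s, (f n : ℂ) • eVec d n)
      Filter.atTop (nhds f) := by
    intro f
    have hf := lp.hasSum_single (E := fun _ : Zd d => ℂ) (p := 2) ENNReal.ofNat_ne_top f
    simp only [single_eq_smul] at hf
    exact hf
  constructor
  · -- finite rank
    set F : Set (Zd d) := {n | len d n ≤ (N:ℤ) + M} with hF
    have hFfin : F.Finite := by
      have hsub : F ⊆ Set.pi Set.univ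
          (fun _ : Fin d => Set.Icc (-((N:ℤ)+M)) ((N:ℤ)+M)) := by
        intro x hx i _
        have h1 : |x i| ≤ len d x :=
          Finset.single_le_sum (f := fun j => |x j|) (fun j _ => abs_nonneg _)
            (Finset.mem_univ i)
        have h2 : len d x ≤ (N:ℤ)+M := hx
        rw [Set.mem_Icc]
        have := abs_le.mp (h1.trans h2)
        exact this
      exact Set.Finite.subset (Set.Finite.pi fun i => Set.finite_Icc _ _) hsub
    set V : Submodule ℂ (Hilb d) := Submodule.span ℂ (eVec d '' F) with hV
    have hVfd : FiniteDimensional ℂ V :=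
      FiniteDimensional.span_of_finite ℂ (hFfin.image _)
    have hVclosed : IsClosed (V : Set (Hilb d)) := Submodule.closed_of_finiteDimensional V
    have hWmem : ∀ f : Hilb d, W f ∈ V := by
      intro f
      have hterm : ∀ s : Finset (Zd d), W (∑ n ∈ s, (f n : ℂ) • eVec d n) ∈ V := by
        intro s
        rw [map_sum]
        apply Submodule.sum_mem
        intro n _
        rw [map_smul, hW]
        by_cases hn : len d n ≤ (N:ℤ) + M
        · exact Submodule.smul_mem _ _ (Submodule.smul_mem _ _
            (Submodule.subset_span ⟨n, hn, rfl⟩))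
        · rw [wgt_zero d N M n (not_le.mp hn)]
          simp
      refine hVclosed.mem_of_tendsto ((W.continuous.tendsto f).comp (hf' f)) ?_
      exact Filter.Eventually.of_forall hterm
    have hle : LinearMap.range (W : Hilb d →ₗ[ℂ] Hilb d) ≤ V := by
      intro y hy
      obtain ⟨f, rfl⟩ := LinearMap.mem_range.mp hy
      exact hWmem f
    exact Submodule.finiteDimensional_of_le hle
  · -- the norm bound
    have hC0 : 0 ≤ (len d m : ℝ) / M :=
      div_nonneg (by exact_mod_cast len_nonneg d m) hM0.le
    have hDsum : ∀ (s : Finset (Zd d)) (a : Zd d → ℂ),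
        ‖D (∑ n ∈ s, a n • eVec d n)‖ ≤ (len d m : ℝ) / M * ‖∑ n ∈ s, a n • eVec d n‖ := by
      intro s a
      have hone := eVec_orthonormal d
      have honeT : Orthonormal ℂ (fun x => eVec d (T x)) := hone.comp T Tinj
      have h1 : D (∑ n ∈ s, a n • eVec d n) = ∑ n ∈ s, (a n * c n) • eVec d (T n) := by
        rw [map_sum]
        exact Finset.sum_congr rfl fun n _ => by rw [map_smul, hDe, smul_smul]
      have h2 := norm_sq_sum_orthonormal honeT s (fun n => a n * c n)
      have h3 := norm_sq_sum_orthonormal hone s a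
      have h4 : ‖D (∑ n ∈ s, a n • eVec d n)‖^2
          ≤ ((len d m : ℝ) / M * ‖∑ n ∈ s, a n • eVec d n‖)^2 := by
        rw [h1, h2, mul_pow, h3, Finset.mul_sum]
        apply Finset.sum_le_sum
        intro n _
        rw [norm_mul]
        calc (‖a n‖ * ‖c n‖)^2 = ‖c n‖^2 * ‖a n‖^2 := by ring
          _ ≤ ((len d m : ℝ) / M)^2 * ‖a n‖^2 := by
              gcongr
              exact hcb n
      exact le_of_pow_le_pow_left₀ two_ne_zero
        (mul_nonneg hC0 (norm_nonneg _)) h4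
    apply ContinuousLinearMap.opNorm_le_bound _ hC0
    intro f
    have hDf : Filter.Tendsto
        (fun s : Finset (Zd d) => ‖D (∑ n ∈ s, (f n : ℂ) • eVec d n)‖)
        Filter.atTop (nhds ‖D f‖) :=
      ((D.continuous.tendsto f).comp (hf' f)).norm
    have hCf : Filter.Tendsto
        (fun s : Finset (Zd d) => (len d m : ℝ) / M * ‖∑ n ∈ s, (f n : ℂ) • eVec d n‖)
        Filter.atTop (nhds ((len d m : ℝ) / M * ‖f‖)) :=
      (hf' f).norm.const_mul _
    exact le_of_tendsto_of_tendsto' hDf hCf (fun s => hDsum s (fun n => f n))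
end
end

section
/- Let d ≥ 1, and let (k_j), k_∞, (σ_j), σ_∞ be as follows: the multi-indices k_j, k_∞ : {1,…,d} → ℕ (0 encoding ∞) satisfy, for each i, that k_j(i) = k_∞(i) for all sufficiently large j when k_∞(i) ≥ 1, and that k_j(i) is eventually 0 or larger than any given bound when k_∞(i) = 0; the skew bicharacters σ_j, σ_∞ of ℤ^d satisfy σ_j(h,y) = 1 for h ∈ H_{k_j} (similarly for σ_∞ and H_{k_∞}) and σ_j → σ_∞ pointwise. Then for every f ∈ ℓ¹(ℤ^d) and every compact operator A on ℓ²(ℤ^d), the operator norm ‖(T_{k_j,σ_j,f} − T_{k_∞,σ_∞,f}) ∘ A‖ converges to 0 as j → ∞. -/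
set_option maxHeartbeats 4000000
set_option synthInstance.maxHeartbeats 400000


noncomputable section

open Filter

/-- Convergence of the multi-indices `k_j` to `k_∞` in `(ℕ∗ ∪ {∞})^d`, where `0` encodes
`∞`: coordinates with finite limit are eventually constant, and coordinates with limit
`∞` are eventually `∞` or larger than any given bound. -/
def MultiIndexTendsto (d : ℕ) (k : ℕ → Fin d → ℕ) (kinf : Fin d → ℕ) : Prop :=
  (∀ i, 1 ≤ kinf i → ∀ᶠ j in atTop, k j i = kinf i) ∧
  (∀ i, kinf i = 0 → ∀ B : ℕ, ∀ᶠ j in atTop, k j i = 0 ∨ B < k j i)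

section AuxLemmas

variable {d : ℕ}

lemma norm_eVec (n : Zd d) : ‖eVec d n‖ = 1 := by
  have h2 : (0:ℝ) < (2:ENNReal).toReal := by
    rw [ENNReal.toReal_ofNat]; norm_num
  have : ‖lp.single (E := fun _ : Zd d => ℂ) 2 n ((fun _ : Zd d => (1:ℂ)) n)‖ = ‖(1:ℂ)‖ :=
    lp.norm_single (E := fun _ : Zd d => ℂ) (p := 2) (by norm_num) n (1:ℂ)
  simpa [eVec] using this

lemma orthonormal_eVec : Orthonormal ℂ (eVec d) := by
  rw [orthonormal_iff_ite]
  intro i j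
  have := lp.inner_single_left (𝕜 := ℂ) (G := fun _ : Zd d => ℂ) i (1:ℂ) (eVec d j)
  rw [eVec, this]
  by_cases h : i = j
  · subst h
    simp [eVec, lp.single_apply_self]
  · simp [eVec, lp.single_apply_ne (E := fun _ : Zd d => ℂ) 2 j (1:ℂ) h, h]

lemma single_eq_smul_eVec (n : Zd d) (c : ℂ) : lp.single 2 n c = c • eVec d n := by
  rw [eVec, ← lp.single_smul]
  norm_num

lemma hasSum_eVec (ψ : Hilb d) : HasSum (fun n => (ψ n : ℂ) • eVec d n) ψ := by
  have := lp.hasSum_single (E := fun _ : Zd d => ℂ) ENNReal.ofNat_ne_top ψ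
  convert this using 2 with n
  rw [single_eq_smul_eVec]

lemma coord_uniq {ki : ℕ} {a b : ℤ}
    (ha : ki = 0 ∨ (Int.fdiv (1 - (ki:ℤ)) 2 ≤ a ∧ a ≤ Int.fdiv ((ki:ℤ) - 1) 2))
    (hb : ki = 0 ∨ (Int.fdiv (1 - (ki:ℤ)) 2 ≤ b ∧ b ≤ Int.fdiv ((ki:ℤ) - 1) 2))
    (hdvd : (ki:ℤ) ∣ a - b) : a = b := by
  rcases Nat.eq_zero_or_pos ki with h0 | hpos
  · subst h0
    have : a - b = 0 := by simpa using hdvd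
    omega
  · rcases ha with h | ha
    · omega
    rcases hb with h | hb
    · omega
    rw [Int.fdiv_eq_ediv_of_nonneg _ (by norm_num)] at ha hb
    rw [Int.fdiv_eq_ediv_of_nonneg _ (by norm_num)] at ha hb
    have : a - b = 0 := by
      refine Int.eq_zero_of_abs_lt_dvd hdvd ?_
      rw [abs_lt]
      constructor <;> omega
    omega

lemma Iset_uniq {k : Fin d → ℕ} {a b : Zd d} (ha : a ∈ Iset d k) (hb : b ∈ Iset d k)
    (hH : a - b ∈ Hset d k) : a = b :=
  funext fun i => coord_uniq (ha i) (hb i) (by simpa using hH i)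

lemma rho_congr {k : Fin d → ℕ} {ρ : Zd d → Zd d}
    (hρ : ∀ n, ρ n ∈ Iset d k ∧ n - ρ n ∈ Hset d k)
    {n n' : Zd d} (h : n - n' ∈ Hset d k) : ρ n = ρ n' := by
  refine Iset_uniq (hρ n).1 (hρ n').1 (fun i => ?_)
  have h1 := (hρ n).2 i
  have h2 := (hρ n').2 i
  have h3 := h i
  have e : (ρ n - ρ n') i = (((n' - ρ n') i - (n - ρ n) i) + (n - n') i) := by
    simp only [Pi.sub_apply]; ring
  rw [e]
  exact (h2.sub h1).add h3

lemma rho_fix {k : Fin d → ℕ} {ρ : Zd d → Zd d}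
    (hρ : ∀ n, ρ n ∈ Iset d k ∧ n - ρ n ∈ Hset d k)
    {a : Zd d} (ha : a ∈ Iset d k) : ρ a = a := by
  refine Iset_uniq (hρ a).1 ha (fun i => ?_)
  have h1 := (hρ a).2 i
  have e : (ρ a - a) i = -((a - ρ a) i) := by simp only [Pi.sub_apply]; ring
  rw [e]
  exact dvd_neg.mpr h1

lemma phi_inj {k : Fin d → ℕ} {ρ : Zd d → Zd d}
    (hρ : ∀ n, ρ n ∈ Iset d k ∧ n - ρ n ∈ Hset d k) (m : Zd d) :
    Function.Injective (fun x => ρ (x - m) + (x - ρ x)) := by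
  have key : ∀ x : Zd d, ρ (ρ (x - m) + (x - ρ x)) = ρ (x - m) := by
    intro x
    have e1 : ρ (ρ (x - m) + (x - ρ x)) = ρ (ρ (x - m)) := by
      refine rho_congr hρ (fun i => ?_)
      have h1 := (hρ x).2 i
      have e : ((ρ (x - m) + (x - ρ x)) - ρ (x - m)) i = (x - ρ x) i := by
        simp only [Pi.sub_apply, Pi.add_apply]; ring
      rw [e]; exact h1
    rw [e1, rho_fix hρ (hρ (x - m)).1]
  intro x x' hxx
  simp only at hxx
  have hr1 : ρ (x - m) = ρ (x' - m) := by
    have := congrArg ρ hxx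
    rwa [key x, key x'] at this
  have hfix : x - ρ x = x' - ρ x' := by
    have := hxx
    rw [hr1] at this
    exact add_left_cancel this
  have hH : x - x' ∈ Hset d k := by
    intro i
    have h1 := (hρ (x - m)).2 i
    have h2 := (hρ (x' - m)).2 i
    have e : (x - x') i = ((x - m) - ρ (x - m)) i - ((x' - m) - ρ (x' - m)) i := by
      simp only [Pi.sub_apply, hr1]; ring
    rw [e]
    exact h1.sub h2
  have hρeq : ρ x = ρ x' := rho_congr hρ hH
  have : x - ρ x + ρ x = x' - ρ x' + ρ x' := by rw [hfix, hρeq]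
  simpa [sub_add_cancel] using this

lemma opNorm_le_one_of_basis (Sm : Hilb d →L[ℂ] Hilb d) (u : Zd d → ℂ) (φ : Zd d → Zd d)
    (hu : ∀ x, ‖u x‖ = 1) (hφ : Function.Injective φ)
    (hSm : ∀ x, Sm (eVec d x) = u x • eVec d (φ x)) : ‖Sm‖ ≤ 1 := by
  refine Sm.opNorm_le_bound zero_le_one fun ψ => ?_
  rw [one_mul]
  have hP : Tendsto (fun s : Finset (Zd d) => ∑ x ∈ s, (ψ x : ℂ) • eVec d x) atTop (nhds ψ) :=
    hasSum_eVec ψ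
  have hnorm : ∀ s : Finset (Zd d),
      ‖Sm (∑ x ∈ s, (ψ x : ℂ) • eVec d x)‖ = ‖∑ x ∈ s, (ψ x : ℂ) • eVec d x‖ := by
    intro s
    have e1 : Sm (∑ x ∈ s, (ψ x : ℂ) • eVec d x)
        = ∑ x ∈ s, ((ψ x : ℂ) * u x) • (eVec d ∘ φ) x := by
      rw [map_sum]
      refine Finset.sum_congr rfl fun x _ => ?_
      rw [map_smul, hSm, smul_smul]; rfl
    rw [e1, norm_eq_sqrt_re_inner (𝕜 := ℂ), norm_eq_sqrt_re_inner (𝕜 := ℂ)]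
    congr 2
    rw [(orthonormal_eVec.comp φ hφ).inner_sum, orthonormal_eVec.inner_sum]
    refine Finset.sum_congr rfl fun x _ => ?_
    calc (starRingEnd ℂ) (ψ x * u x) * (ψ x * u x)
        = ((starRingEnd ℂ) (ψ x) * ψ x) * ((starRingEnd ℂ) (u x) * u x) := by
          rw [map_mul]; ring
      _ = (starRingEnd ℂ) (ψ x) * ψ x := by
          rw [RCLike.conj_mul, RCLike.conj_mul, hu]; norm_num
  have h1 : Tendsto (fun s : Finset (Zd d) => ‖Sm (∑ x ∈ s, (ψ x : ℂ) • eVec d x)‖) atTop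
      (nhds ‖Sm ψ‖) := ((Sm.continuous.tendsto ψ).comp hP).norm
  have h2 : Tendsto (fun s : Finset (Zd d) => ‖∑ x ∈ s, (ψ x : ℂ) • eVec d x‖) atTop
      (nhds ‖ψ‖) := hP.norm
  exact (tendsto_nhds_unique (h1.congr hnorm) h2).le

end AuxLemmas

/-- If `(k_j, σ_j) → (k_∞, σ_∞)` in `Ξ^d`, then for every `f ∈ ℓ¹(ℤ^d)` and every compact
operator `A` on `ℓ²(ℤ^d)`, the operator norms `‖(T_{k_j,σ_j,f} − T_{k_∞,σ_∞,f}) ∘ A‖`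
converge to `0`. -/
theorem stmt12 (d : ℕ) (hd : 1 ≤ d)
    (k : ℕ → Fin d → ℕ) (kinf : Fin d → ℕ)
    (hk : MultiIndexTendsto d k kinf)
    (σ : ℕ → Zd d → Zd d → ℂ) (σinf : Zd d → Zd d → ℂ)
    (hσ : ∀ j, IsSkewBichar d (σ j)) (hσinf : IsSkewBichar d σinf)
    (hσH : ∀ j, ∀ h ∈ Hset d (k j), ∀ y : Zd d, σ j h y = 1)
    (hσinfH : ∀ h ∈ Hset d kinf, ∀ y : Zd d, σinf h y = 1)
    (hσconv : ∀ x y : Zd d, Tendsto (fun j => σ j x y) atTop (nhds (σinf x y)))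
    (r : ℕ → Zd d → Zd d) (rinf : Zd d → Zd d)
    (hr : ∀ j, ∀ n : Zd d, r j n ∈ Iset d (k j) ∧ n - r j n ∈ Hset d (k j))
    (hrinf : ∀ n : Zd d, rinf n ∈ Iset d kinf ∧ n - rinf n ∈ Hset d kinf)
    (S : ℕ → Zd d → (Hilb d →L[ℂ] Hilb d)) (Sinf : Zd d → (Hilb d →L[ℂ] Hilb d))
    (hS : ∀ j, ∀ m x : Zd d,
      S j m (eVec d x) = σ j x m • eVec d (r j (x - m) + (x - r j x)))
    (hSinf : ∀ m x : Zd d,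
      Sinf m (eVec d x) = σinf x m • eVec d (rinf (x - m) + (x - rinf x)))
    (f : L1 d)
    (T : ℕ → (Hilb d →L[ℂ] Hilb d)) (Tinf : Hilb d →L[ℂ] Hilb d)
    (hT : ∀ j, HasSum (fun m : Zd d => f m • S j m) (T j))
    (hTinf : HasSum (fun m : Zd d => f m • Sinf m) Tinf) :
    ∀ A : Hilb d →L[ℂ] Hilb d, IsCompactOperator (⇑A) →
      Tendsto (fun j => ‖(T j - Tinf).comp A‖) atTop (nhds 0) := by
  classical
  intro A hA
  have hσn : ∀ j, ∀ x y : Zd d, ‖σ j x y‖ = 1 := fun j => (hσ j).1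
  have hσinfn : ∀ x y : Zd d, ‖σinf x y‖ = 1 := hσinf.1
  -- ℓ¹ facts
  have hf1 : HasSum (fun m : Zd d => ‖f m‖) ‖f‖ := by
    have h1 : (0:ℝ) < (1:ENNReal).toReal := by simp
    have := lp.hasSum_norm (E := fun _ : Zd d => ℂ) h1 f
    simpa using this
  have hfs : Summable (fun m : Zd d => ‖f m‖) := hf1.summable
  -- norm bounds
  have hSle : ∀ j m, ‖S j m‖ ≤ 1 := fun j m =>
    opNorm_le_one_of_basis (S j m) (fun x => σ j x m) _ (fun x => hσn j x m)
      (phi_inj (hr j) m) (hS j m)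
  have hSinfle : ∀ m, ‖Sinf m‖ ≤ 1 := fun m =>
    opNorm_le_one_of_basis (Sinf m) (fun x => σinf x m) _ (fun x => hσinfn x m)
      (phi_inj hrinf m) (hSinf m)
  have hTle : ∀ j, ‖T j‖ ≤ ‖f‖ := by
    intro j
    have hsum : Summable (fun m : Zd d => ‖f m • S j m‖) := by
      refine Summable.of_nonneg_of_le (fun m => norm_nonneg _) (fun m => ?_) hfs
      rw [norm_smul (f m) (S j m)]
      exact mul_le_of_le_one_right (norm_nonneg _) (hSle j m)
    rw [← (hT j).tsum_eq]
    refine (norm_tsum_le_tsum_norm hsum).trans ?_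
    rw [← hf1.tsum_eq]
    refine Summable.tsum_le_tsum (fun m => ?_) hsum hfs
    rw [norm_smul (f m) (S j m)]
    exact mul_le_of_le_one_right (norm_nonneg _) (hSle j m)
  have hTinfle : ‖Tinf‖ ≤ ‖f‖ := by
    have hsum : Summable (fun m : Zd d => ‖f m • Sinf m‖) := by
      refine Summable.of_nonneg_of_le (fun m => norm_nonneg _) (fun m => ?_) hfs
      rw [norm_smul (f m) (Sinf m)]
      exact mul_le_of_le_one_right (norm_nonneg _) (hSinfle m)
    rw [← hTinf.tsum_eq]
    refine (norm_tsum_le_tsum_norm hsum).trans ?_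
    rw [← hf1.tsum_eq]
    refine Summable.tsum_le_tsum (fun m => ?_) hsum hfs
    rw [norm_smul (f m) (Sinf m)]
    exact mul_le_of_le_one_right (norm_nonneg _) (hSinfle m)
  have hC : (0:ℝ) < 2 * ‖f‖ + 1 := by positivity
  have hDleC : ∀ j, ‖T j - Tinf‖ ≤ 2 * ‖f‖ + 1 := fun j =>
    (norm_sub_le _ _).trans (by linarith [hTle j, hTinfle])
  -- eventual equality of the fundamental-domain representatives
  have hrconv : ∀ n : Zd d, ∀ᶠ j in atTop, r j n = rinf n := by
    intro n
    have hcoord : ∀ i : Fin d, ∀ᶠ j in atTop, r j n i = rinf n i := by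
      intro i
      by_cases hki : kinf i = 0
      · have hrinf_i : rinf n i = n i := by
          have h := (hrinf n).2 i
          rw [hki] at h
          have h2 : (n - rinf n) i = 0 := by simpa using h
          simp only [Pi.sub_apply] at h2
          omega
        filter_upwards [hk.2 i hki (2 * (n i).natAbs + 2)] with j hj
        rcases hj with hj0 | hjB
        · have h := (hr j n).2 i
          rw [hj0] at h
          have h2 : (n - r j n) i = 0 := by simpa using h
          simp only [Pi.sub_apply] at h2
          omega
        · have hb : (Int.fdiv (1 - (k j i : ℤ)) 2 ≤ n i ∧ n i ≤ Int.fdiv ((k j i : ℤ) - 1) 2) := by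
            rw [Int.fdiv_eq_ediv_of_nonneg _ (by norm_num), Int.fdiv_eq_ediv_of_nonneg _ (by norm_num)]
            omega
          have hd : (k j i : ℤ) ∣ r j n i - n i := by
            have h := (hr j n).2 i
            have e : r j n i - n i = -((n - r j n) i) := by simp only [Pi.sub_apply]; ring
            rw [e]; exact dvd_neg.mpr h
          have := coord_uniq ((hr j n).1 i) (Or.inr hb) hd
          omega
      · have h1 : 1 ≤ kinf i := Nat.one_le_iff_ne_zero.2 hki
        filter_upwards [hk.1 i h1] with j hj
        have ha := (hr j n).1 i
        rw [hj] at ha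
        have hd : (kinf i : ℤ) ∣ r j n i - rinf n i := by
          have h2 := (hr j n).2 i
          rw [hj] at h2
          have h3 := (hrinf n).2 i
          have e : r j n i - rinf n i = (n - rinf n) i - (n - r j n) i := by
            simp only [Pi.sub_apply]; ring
          rw [e]; exact h3.sub h2
        exact coord_uniq ha ((hrinf n).1 i) hd
    exact (Filter.eventually_all.2 hcoord).mono fun j hj => funext hj
  -- strong convergence on basis vectors
  have hSOTe : ∀ x : Zd d, Tendsto (fun j => (T j - Tinf) (eVec d x)) atTop (nhds 0) := by
    intro x
    rw [NormedAddCommGroup.tendsto_nhds_zero]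
    intro ε hε
    obtain ⟨F, hF⟩ := ((tendsto_order.1
      (tendsto_tsum_compl_atTop_zero (fun m : Zd d => ‖f m‖))).2 (ε/4) (by positivity)).exists
    set g : ℕ → Zd d → Hilb d := fun j m => f m • (S j m (eVec d x) - Sinf m (eVec d x)) with hg
    have hgsum : ∀ j, HasSum (g j) ((T j - Tinf) (eVec d x)) := by
      intro j
      have h0 := ((hT j).sub hTinf).mapL ((ContinuousLinearMap.apply ℂ (Hilb d)) (eVec d x))
      simpa [g, ContinuousLinearMap.sub_apply, ContinuousLinearMap.smul_apply, smul_sub]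
        using h0
    have hSx : ∀ j m, ‖S j m (eVec d x)‖ = 1 := by
      intro j m; rw [hS j m x, norm_smul, hσn j x m, norm_eVec, one_mul]
    have hSinfx : ∀ m, ‖Sinf m (eVec d x)‖ = 1 := by
      intro m; rw [hSinf m x, norm_smul, hσinfn x m, norm_eVec, one_mul]
    have hgle : ∀ j m, ‖g j m‖ ≤ 2 * ‖f m‖ := by
      intro j m
      simp only [g]
      rw [norm_smul]
      have h2 := norm_sub_le (S j m (eVec d x)) (Sinf m (eVec d x))
      rw [hSx, hSinfx] at h2
      calc ‖f m‖ * ‖S j m (eVec d x) - Sinf m (eVec d x)‖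
          ≤ ‖f m‖ * 2 := mul_le_mul_of_nonneg_left (by linarith) (norm_nonneg _)
        _ = 2 * ‖f m‖ := by ring
    have hgsummable : ∀ j, Summable (fun m => ‖g j m‖) := fun j =>
      Summable.of_nonneg_of_le (fun m => norm_nonneg _) (hgle j) (hfs.mul_left 2)
    set c : ℝ := ε / (2 * (F.card + 1)) with hc
    have hcpos : 0 < c := by positivity
    have hevF : ∀ᶠ j in atTop, ∀ m ∈ (F : Set (Zd d)), ‖g j m‖ < c := by
      rw [Filter.eventually_all_finite F.finite_toSet]
      intro m hm
      have htend : Tendsto (fun j => ‖g j m‖) atTop (nhds 0) := by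
        have hev : (fun j => ‖f m‖ * ‖σ j x m - σinf x m‖) =ᶠ[atTop]
            (fun j => ‖g j m‖) := by
          filter_upwards [hrconv (x - m), hrconv x] with j h1 h2
          have e : S j m (eVec d x) - Sinf m (eVec d x)
              = (σ j x m - σinf x m) • eVec d (rinf (x - m) + (x - rinf x)) := by
            rw [hS j m x, hSinf m x, h1, h2, sub_smul]
          simp only [g]
          rw [e, norm_smul, norm_smul, norm_eVec, mul_one]
        have h0 : Tendsto (fun j => ‖f m‖ * ‖σ j x m - σinf x m‖) atTop
            (nhds (‖f m‖ * ‖(0:ℂ)‖)) := by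
          refine tendsto_const_nhds.mul (Filter.Tendsto.norm ?_)
          simpa [sub_self] using (hσconv x m).sub (tendsto_const_nhds (x := σinf x m))
        have h0' : Tendsto (fun j => ‖f m‖ * ‖σ j x m - σinf x m‖) atTop (nhds 0) := by
          simpa using h0
        exact h0'.congr' hev
      exact (tendsto_order.1 htend).2 c hcpos
    filter_upwards [hevF] with j hj
    rw [← (hgsum j).tsum_eq]
    have h1 : ‖∑' m, g j m‖ ≤ ∑' m, ‖g j m‖ := norm_tsum_le_tsum_norm (hgsummable j)
    have hsplit : ∑' m, ‖g j m‖
        = ∑ m ∈ F, ‖g j m‖ + ∑' m : {m : Zd d // m ∉ F}, ‖g j (m : Zd d)‖ :=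
      (Summable.sum_add_tsum_subtype_compl (hgsummable j) F).symm
    have hFsum : ∑ m ∈ F, ‖g j m‖ ≤ F.card * c := by
      calc ∑ m ∈ F, ‖g j m‖ ≤ ∑ _m ∈ F, c := Finset.sum_le_sum (fun m hm => (hj m hm).le)
        _ = F.card * c := by rw [Finset.sum_const, nsmul_eq_mul]
    have hcard : (F.card : ℝ) * c ≤ ε / 2 := by
      have hne : ((F.card : ℝ) + 1) ≠ 0 := by positivity
      have h1 : (F.card : ℝ) * c ≤ ((F.card : ℝ) + 1) * c :=
        mul_le_mul_of_nonneg_right (by linarith) hcpos.le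
      have h2 : ((F.card : ℝ) + 1) * c = ε / 2 := by
        rw [hc]; field_simp
      linarith
    have htails : ∑' m : {m : Zd d // m ∉ F}, ‖g j (m : Zd d)‖
        ≤ 2 * ∑' m : {m : Zd d // m ∉ F}, ‖f (m : Zd d)‖ := by
      rw [← tsum_mul_left]
      exact Summable.tsum_le_tsum (fun m => hgle j m) ((hgsummable j).subtype _)
        ((hfs.mul_left 2).subtype _)
    have htails2 : ∑' m : {m : Zd d // m ∉ F}, ‖g j (m : Zd d)‖ < ε / 2 :=
      lt_of_le_of_lt htails (by linarith)
    calc ‖∑' m, g j m‖ ≤ ∑' m, ‖g j m‖ := h1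
      _ = ∑ m ∈ F, ‖g j m‖ + ∑' m : {m : Zd d // m ∉ F}, ‖g j (m : Zd d)‖ := hsplit
      _ < ε := by linarith [hFsum.trans hcard]
  -- strong convergence everywhere
  have hSOT : ∀ ψ : Hilb d, Tendsto (fun j => (T j - Tinf) ψ) atTop (nhds 0) := by
    intro ψ
    rw [NormedAddCommGroup.tendsto_nhds_zero]
    intro ε hε
    obtain ⟨s, hs⟩ := (Metric.tendsto_nhds.mp (hasSum_eVec ψ)
      (ε / (2 * (2 * ‖f‖ + 1))) (by positivity)).exists
    have h2 : Tendsto (fun j => (T j - Tinf) (∑ x ∈ s, (ψ x : ℂ) • eVec d x)) atTop (nhds 0) := by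
      have h3 : Tendsto (fun j => ∑ x ∈ s, (ψ x : ℂ) • (T j - Tinf) (eVec d x)) atTop
          (nhds (∑ x ∈ s, (0 : Hilb d))) :=
        tendsto_finset_sum s (fun x _ => by
          simpa using (hSOTe x).const_smul (ψ x : ℂ))
      simp only [Finset.sum_const_zero] at h3
      refine h3.congr fun j => ?_
      rw [map_sum]
      exact Finset.sum_congr rfl fun x _ => (map_smul _ _ _).symm
    filter_upwards [NormedAddCommGroup.tendsto_nhds_zero.mp h2 (ε/2) (by positivity)] with j hj
    have key : ‖(T j - Tinf) ψ‖
        ≤ ‖(T j - Tinf) (ψ - ∑ x ∈ s, (ψ x : ℂ) • eVec d x)‖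
          + ‖(T j - Tinf) (∑ x ∈ s, (ψ x : ℂ) • eVec d x)‖ := by
      have e : (T j - Tinf) ψ = (T j - Tinf) (ψ - ∑ x ∈ s, (ψ x : ℂ) • eVec d x)
          + (T j - Tinf) (∑ x ∈ s, (ψ x : ℂ) • eVec d x) := by
        rw [map_sub, sub_add_cancel]
      rw [e]; exact norm_add_le _ _
    have hb1 : ‖(T j - Tinf) (ψ - ∑ x ∈ s, (ψ x : ℂ) • eVec d x)‖
        ≤ (2 * ‖f‖ + 1) * ‖ψ - ∑ x ∈ s, (ψ x : ℂ) • eVec d x‖ :=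
      ((T j - Tinf).le_opNorm _).trans
        (mul_le_mul_of_nonneg_right (hDleC j) (norm_nonneg _))
    have hψP : ‖ψ - ∑ x ∈ s, (ψ x : ℂ) • eVec d x‖ < ε / (2 * (2 * ‖f‖ + 1)) := by
      rw [← dist_eq_norm, dist_comm]
      exact hs
    have hmul : (2 * ‖f‖ + 1) * ‖ψ - ∑ x ∈ s, (ψ x : ℂ) • eVec d x‖
        ≤ (2 * ‖f‖ + 1) * (ε / (2 * (2 * ‖f‖ + 1))) :=
      mul_le_mul_of_nonneg_left hψP.le hC.le
    have hCe : (2 * ‖f‖ + 1) * (ε / (2 * (2 * ‖f‖ + 1))) = ε / 2 := by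
      field_simp
    have hj' : ‖(T j - Tinf) (∑ x ∈ s, (ψ x : ℂ) • eVec d x)‖ < ε/2 := hj
    linarith
  -- compactness step
  obtain ⟨K, hKc, hKmem⟩ := hA
  rw [NormedAddCommGroup.tendsto_nhds_zero]
  intro ε hε
  obtain ⟨δ, hδ, hball⟩ := Metric.mem_nhds_iff.mp hKmem
  obtain ⟨t, htfin, htcover⟩ := Metric.totallyBounded_iff.mp hKc.totallyBounded
    (ε * δ / (8 * (2 * ‖f‖ + 1))) (by positivity)
  have hev : ∀ᶠ j in atTop, ∀ y ∈ t, ‖(T j - Tinf) y‖ < ε * δ / 8 :=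
    (Filter.eventually_all_finite htfin).mpr fun y _ =>
      NormedAddCommGroup.tendsto_nhds_zero.mp (hSOT y) _ (by positivity)
  filter_upwards [hev] with j hj
  have hbound : ∀ v : Hilb d, ‖v‖ < δ → ‖(T j - Tinf) (A v)‖ ≤ ε * δ / 4 := by
    intro v hv
    have hvK : A v ∈ K := hball (by
      simp only [Metric.mem_ball, dist_zero_right]
      exact hv)
    obtain ⟨y, hyt, hyd⟩ : ∃ y ∈ t, A v ∈ Metric.ball y (ε * δ / (8 * (2 * ‖f‖ + 1))) := by
      have := htcover hvK
      simpa using this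
    have hsplit : ‖(T j - Tinf) (A v)‖
        ≤ ‖(T j - Tinf) (A v - y)‖ + ‖(T j - Tinf) y‖ := by
      have e : (T j - Tinf) (A v) = (T j - Tinf) (A v - y) + (T j - Tinf) y := by
        rw [map_sub, sub_add_cancel]
      rw [e]; exact norm_add_le _ _
    have h1 : ‖(T j - Tinf) (A v - y)‖
        ≤ (2 * ‖f‖ + 1) * (ε * δ / (8 * (2 * ‖f‖ + 1))) := by
      refine ((T j - Tinf).le_opNorm _).trans ?_
      have hdist : ‖A v - y‖ ≤ ε * δ / (8 * (2 * ‖f‖ + 1)) := by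
        rw [← dist_eq_norm]
        exact (Metric.mem_ball.mp hyd).le
      exact mul_le_mul (hDleC j) hdist (norm_nonneg _) hC.le
    have hCe : (2 * ‖f‖ + 1) * (ε * δ / (8 * (2 * ‖f‖ + 1))) = ε * δ / 8 := by
      field_simp
    have h2 := hj y hyt
    rw [hCe] at h1
    linarith
  have hop : ‖(T j - Tinf).comp A‖ ≤ ε / 2 := by
    refine ContinuousLinearMap.opNorm_le_bound _ (by positivity) fun v => ?_
    rcases eq_or_ne v 0 with rfl | hv0
    · simp
    · have hnv : 0 < ‖v‖ := norm_pos_iff.mpr hv0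
      have hc : (0:ℝ) < δ / (2 * ‖v‖) := by positivity
      have hw : ‖((δ / (2 * ‖v‖) : ℝ) : ℂ) • v‖ < δ := by
        rw [norm_smul ((δ / (2 * ‖v‖) : ℝ) : ℂ) v, Complex.norm_real, Real.norm_eq_abs,
          abs_of_pos hc]
        have e : δ / (2 * ‖v‖) * ‖v‖ = δ / 2 := by field_simp
        rw [e]; linarith
      have hb := hbound _ hw
      have emap : (T j - Tinf) (A (((δ / (2 * ‖v‖) : ℝ) : ℂ) • v))
          = ((δ / (2 * ‖v‖) : ℝ) : ℂ) • (T j - Tinf) (A v) := by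
        simp only [map_smul]
      rw [emap, norm_smul ((δ / (2 * ‖v‖) : ℝ) : ℂ) ((T j - Tinf) (A v)),
        Complex.norm_real, Real.norm_eq_abs, abs_of_pos hc] at hb
      have hb2 : δ * ‖(T j - Tinf) (A v)‖ ≤ δ * (ε / 2 * ‖v‖) := by
        have e1 : δ * ‖(T j - Tinf) (A v)‖
            = (2 * ‖v‖) * (δ / (2 * ‖v‖) * ‖(T j - Tinf) (A v)‖) := by
          field_simp
        have e2 : δ * (ε / 2 * ‖v‖) = (2 * ‖v‖) * (ε * δ / 4) := by ring
        rw [e1, e2]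
        exact mul_le_mul_of_nonneg_left hb (by positivity)
      have := le_of_mul_le_mul_left hb2 hδ
      simpa [ContinuousLinearMap.comp_apply] using this
  rw [Real.norm_eq_abs, abs_of_nonneg (norm_nonneg _)]
  linarith
end
end

section
/- Let G be a compact Hausdorff abelian topological group whose continuous characters (continuous group homomorphisms from G to the circle group {z ∈ ℂ : |z| = 1}) separate points, and let λ be the Haar probability measure on G. Let f : G → ℂ be a continuous function with f(1) = 0, and let ε > 0. Then there exists a continuous function φ : G → ℝ which is a finite ℂ-linear combination of continuous characters of G, such that φ(g) ≥ 0 for all g ∈ G, ∫_G φ dλ = 1, and ∫_G φ·|f| dλ ≤ ε. -/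
open MeasureTheory
open MeasureTheory

namespace Stmt15Aux

variable {G : Type*} [CommGroup G] [TopologicalSpace G]

def niceSet (G : Type*) [CommGroup G] [TopologicalSpace G] : Set (G → ℂ) :=
  {F | ∃ χ : G →* ℂ, Continuous χ ∧ (∀ x, ‖χ x‖ = 1) ∧ F = ⇑χ}

lemma one_mem_niceSet : (1 : G → ℂ) ∈ niceSet G :=
  ⟨1, by exact (continuous_const : Continuous fun _ : G => (1:ℂ)),
    fun x => by simp, by ext g; simp⟩

lemma mul_mem_niceSet {F₁ F₂ : G → ℂ} (h₁ : F₁ ∈ niceSet G) (h₂ : F₂ ∈ niceSet G) :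
    F₁ * F₂ ∈ niceSet G := by
  obtain ⟨χ₁, hc₁, hn₁, rfl⟩ := h₁
  obtain ⟨χ₂, hc₂, hn₂, rfl⟩ := h₂
  refine ⟨χ₁ * χ₂, ?_, fun x => by simp [hn₁ x, hn₂ x], by ext g; simp⟩
  exact hc₁.mul hc₂

lemma conj_mem_niceSet {F : G → ℂ} (h : F ∈ niceSet G) :
    (fun g => (starRingEnd ℂ) (F g)) ∈ niceSet G := by
  obtain ⟨χ, hc, hn, rfl⟩ := h
  refine ⟨((starRingEnd ℂ) : ℂ →+* ℂ).toMonoidHom.comp χ, ?_, fun x => by simp [hn x], by ext g; simp⟩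
  exact Complex.continuous_conj.comp hc

def niceMonoid (G : Type*) [CommGroup G] [TopologicalSpace G] : Submonoid (G → ℂ) where
  carrier := niceSet G
  one_mem' := one_mem_niceSet
  mul_mem' := mul_mem_niceSet

lemma span_eq_adjoin :
    Subalgebra.toSubmodule (Algebra.adjoin ℂ (niceSet G)) = Submodule.span ℂ (niceSet G) := by
  rw [Algebra.adjoin_eq_span]
  have : Submonoid.closure (niceSet G) = niceMonoid G := Submonoid.closure_eq (niceMonoid G)
  rw [this]
  rfl

lemma pow_sum_mem_span (s0 : Finset (G →* ℂ))
    (hs0 : ∀ χ ∈ s0, Continuous χ ∧ ∀ x, ‖χ x‖ = 1) (n : ℕ) :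
    (fun g => ∑ χ ∈ s0, (2 + χ g + (starRingEnd ℂ) (χ g))) ^ n
      ∈ Submodule.span ℂ (niceSet G) := by
  rw [← span_eq_adjoin]
  have hq : (fun g => ∑ χ ∈ s0, (2 + χ g + (starRingEnd ℂ) (χ g)))
      ∈ Algebra.adjoin ℂ (niceSet G) := by
    have : (fun g => ∑ χ ∈ s0, (2 + χ g + (starRingEnd ℂ) (χ g)))
        = ∑ χ ∈ s0, ((2 : G → ℂ) + ⇑χ + fun g => (starRingEnd ℂ) (χ g)) := by
      funext g; simp [Finset.sum_apply]
    rw [this]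
    refine Subalgebra.sum_mem _ fun χ hχ => ?_
    refine add_mem (add_mem ?_ ?_) ?_
    · have h2 : (2 : G → ℂ) = (1 : G → ℂ) + 1 := by norm_num
      rw [h2]
      exact add_mem (one_mem _) (one_mem _)
    · exact Algebra.subset_adjoin ⟨χ, (hs0 χ hχ).1, (hs0 χ hχ).2, rfl⟩
    · exact Algebra.subset_adjoin (conj_mem_niceSet ⟨χ, (hs0 χ hχ).1, (hs0 χ hχ).2, rfl⟩)
  exact pow_mem hq n

end Stmt15Aux

namespace Stmt15Aux2
variable {G : Type*} [CommGroup G] [TopologicalSpace G]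

def niceSet (G : Type*) [CommGroup G] [TopologicalSpace G] : Set (G → ℂ) :=
  {F | ∃ χ : G →* ℂ, Continuous χ ∧ (∀ x, ‖χ x‖ = 1) ∧ F = ⇑χ}

lemma rep_of_mem_span {q : G → ℂ} (hq : q ∈ Submodule.span ℂ (niceSet G)) :
    ∃ (s : Finset (G →* ℂ)) (c : (G →* ℂ) → ℂ),
      (∀ χ ∈ s, Continuous χ ∧ ∀ x, ‖χ x‖ = 1) ∧ ∀ g, q g = ∑ χ ∈ s, c χ * χ g := by
  rw [Submodule.mem_span_set] at hq
  obtain ⟨d, hsupp, hsum⟩ := hq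
  classical
  let t : (G → ℂ) → (G →* ℂ) := fun F => if h : F ∈ niceSet G then h.choose else 1
  have ht : ∀ F ∈ niceSet G, Continuous (t F) ∧ (∀ x, ‖t F x‖ = 1) ∧ F = ⇑(t F) := by
    intro F hF
    simp only [t, dif_pos hF]
    exact ⟨hF.choose_spec.1, hF.choose_spec.2.1, hF.choose_spec.2.2⟩
  refine ⟨d.support.image t, fun χ => d ⇑χ, ?_, ?_⟩
  · intro χ hχ
    obtain ⟨F, hF, rfl⟩ := Finset.mem_image.1 hχ
    have h := ht F (hsupp hF)
    exact ⟨h.1, h.2.1⟩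
  · intro g
    have hinj : ∀ F₁ ∈ d.support, ∀ F₂ ∈ d.support, t F₁ = t F₂ → F₁ = F₂ := by
      intro F₁ h₁ F₂ h₂ he
      rw [(ht F₁ (hsupp h₁)).2.2, (ht F₂ (hsupp h₂)).2.2, he]
    rw [Finset.sum_image hinj]
    have : q g = ∑ F ∈ d.support, d F * F g := by
      rw [← hsum]
      rw [Finsupp.sum]
      rw [Finset.sum_apply]
      exact Finset.sum_congr rfl fun F _ => by simp [smul_eq_mul]
    rw [this]
    refine Finset.sum_congr rfl fun F hF => ?_
    show d F * F g = d ⇑(t F) * (t F) g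
    rw [← (ht F (hsupp hF)).2.2]

lemma re_lt_one {z : ℂ} (hz : ‖z‖ = 1) (h1 : z ≠ 1) : z.re < 1 := by
  have habs : ‖z‖ = 1 := hz
  have hre : z.re ≤ 1 := le_trans (le_abs_self _) (habs ▸ Complex.abs_re_le_norm z)
  rcases lt_or_eq_of_le hre with h | h
  · exact h
  · exfalso
    apply h1
    have hsq : z.re * z.re + z.im * z.im = 1 := by
      have h2 : Complex.normSq z = 1 := by
        rw [← Complex.sq_norm, habs]; norm_num
      simpa [Complex.normSq_apply] using h2
    have him : z.im = 0 := by nlinarith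
    exact Complex.ext (by simp [h]) (by simp [him])

lemma integrable_of_continuous {X : Type*} [TopologicalSpace X] [CompactSpace X]
    [MeasurableSpace X] [OpensMeasurableSpace X] (μ : Measure X) [IsFiniteMeasure μ]
    {h : X → ℝ} (hh : Continuous h) : Integrable h μ :=
  hh.integrable_of_hasCompactSupport
    (IsCompact.of_isClosed_subset isCompact_univ (isClosed_tsupport _) (Set.subset_univ _))

end Stmt15Aux2


open Stmt15Aux Stmt15Aux2

/-- Fejér-type lemma: on a compact Hausdorff abelian group `G` whose continuous
characters separate points, with Haar probability measure `λ`, for every continuous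
`f : G → ℂ` with `f(1) = 0` and every `ε > 0` there is a nonnegative real-valued finite
linear combination `φ` of continuous characters with `∫ φ dλ = 1` and `∫ φ |f| dλ ≤ ε`. -/
theorem stmt15 {G : Type*} [CommGroup G] [TopologicalSpace G] [IsTopologicalGroup G]
    [CompactSpace G] [T2Space G] [MeasurableSpace G] [BorelSpace G]
    (μ : Measure G) [μ.IsHaarMeasure] [IsProbabilityMeasure μ]
    (hsep : ∀ g : G, g ≠ 1 → ∃ χ : G →* ℂ, Continuous χ ∧ (∀ x, ‖χ x‖ = 1) ∧ χ g ≠ 1)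
    (f : C(G, ℂ)) (hf : f 1 = 0) (ε : ℝ) (hε : 0 < ε) :
    ∃ (s : Finset (G →* ℂ)) (c : (G →* ℂ) → ℂ) (φ : G → ℝ),
      (∀ χ ∈ s, Continuous χ ∧ ∀ x, ‖χ x‖ = 1) ∧
      (∀ g : G, (φ g : ℂ) = ∑ χ ∈ s, c χ * χ g) ∧
      (∀ g : G, 0 ≤ φ g) ∧
      (∫ g, φ g ∂μ) = 1 ∧
      (∫ g, φ g * ‖f g‖ ∂μ) ≤ ε := by
  classical
  set B := ‖f‖ with hB
  have hB0 : (0:ℝ) ≤ B := norm_nonneg f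
  have hfB : ∀ g, ‖f g‖ ≤ B := fun g => by
    exact f.norm_coe_le_norm g
  clear_value B
  have habs_cont : Continuous fun g => ‖f g‖ :=
    continuous_norm.comp f.continuous
  set K : Set G := {g | ε/2 ≤ ‖f g‖} with hKdef
  have hKclosed : IsClosed K := isClosed_le continuous_const habs_cont
  have hKcompact : IsCompact K := hKclosed.isCompact
  have h1K : (1:G) ∉ K := by
    simp only [hKdef, Set.mem_setOf_eq, hf, norm_zero, not_le]
    positivity
  rcases Set.eq_empty_or_nonempty K with hKe | hKne
  · -- trivial case: |f| < ε/2 everywhere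
    have hflt : ∀ g, ‖f g‖ ≤ ε/2 := by
      intro g
      by_contra h
      exact (Set.eq_empty_iff_forall_notMem.1 hKe g) (le_of_not_ge h)
    refine ⟨{1}, fun _ => 1, fun _ => 1, ?_, ?_, ?_, ?_, ?_⟩
    · intro χ hχ
      rw [Finset.mem_singleton] at hχ
      subst hχ
      exact ⟨by exact (continuous_const : Continuous fun _ : G => (1:ℂ)),
        fun x => by simp⟩
    · intro g; simp
    · intro g; norm_num
    · simp
    · calc (∫ g, (1:ℝ) * ‖f g‖ ∂μ) ≤ ∫ _g, ε/2 ∂μ := by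
            refine integral_mono ?_ (integrable_const _) ?_
            · simpa using integrable_of_continuous μ habs_cont
            · intro g; simpa using hflt g
        _ = ε/2 := by simp
        _ ≤ ε := by linarith
  · -- main case
    have hchar : ∀ i : K, ∃ χ : G →* ℂ, Continuous χ ∧ (∀ x, ‖χ x‖ = 1) ∧ χ i ≠ 1 :=
      fun i => hsep i.1 (fun h => h1K (h ▸ i.2))
    choose ch hch1 hch2 hch3 using hchar
    have hcover : K ⊆ ⋃ i : K, {y | (ch i y).re < 1} := by
      intro g hg
      exact Set.mem_iUnion.2 ⟨⟨g, hg⟩, re_lt_one (hch2 ⟨g, hg⟩ g) (hch3 ⟨g, hg⟩)⟩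
    obtain ⟨t, ht⟩ := hKcompact.elim_finite_subcover (fun i : K => {y | (ch i y).re < 1})
      (fun i => isOpen_lt (Complex.continuous_re.comp (hch1 i)) continuous_const) hcover
    set s0 : Finset (G →* ℂ) := insert 1 (t.image ch) with hs0
    have hs0nice : ∀ χ ∈ s0, Continuous χ ∧ ∀ x, ‖χ x‖ = 1 := by
      intro χ hχ
      rcases Finset.mem_insert.1 hχ with rfl | hχ
      · exact ⟨by exact (continuous_const : Continuous fun _ : G => (1:ℂ)),
          fun x => by simp⟩
      · obtain ⟨i, _, rfl⟩ := Finset.mem_image.1 hχ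
        exact ⟨hch1 i, hch2 i⟩
    set N : ℕ := s0.card with hN
    have hNpos : 0 < N := Finset.card_pos.2 ⟨1, Finset.mem_insert_self _ _⟩
    have hNR : (0:ℝ) < 4 * N := by positivity
    set r : G → ℝ := fun y => ∑ χ ∈ s0, (2 + 2*(χ y).re) with hr
    have hrcont : Continuous r := by
      refine continuous_finset_sum _ fun χ hχ => ?_
      exact continuous_const.add (continuous_const.mul
        (Complex.continuous_re.comp (hs0nice χ hχ).1))
    have hterm : ∀ χ ∈ s0, ∀ y : G, 0 ≤ 2 + 2*(χ y).re ∧ 2 + 2*(χ y).re ≤ 4 := by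
      intro χ hχ y
      have h1 : |(χ y).re| ≤ 1 := by
        have := Complex.abs_re_le_norm (χ y)
        rw [(hs0nice χ hχ).2 y] at this
        exact this
      rw [abs_le] at h1
      constructor <;> linarith [h1.1, h1.2]
    have hr_nonneg : ∀ y, 0 ≤ r y := fun y =>
      Finset.sum_nonneg fun χ hχ => (hterm χ hχ y).1
    have hrK : ∀ y ∈ K, r y < 4*N := by
      intro y hy
      have hy2 := ht hy
      rw [Set.mem_iUnion₂] at hy2
      obtain ⟨i, hit, hyi⟩ := hy2
      have hch_mem : ch i ∈ s0 := Finset.mem_insert_of_mem (Finset.mem_image_of_mem ch hit)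
      have hlt : ∑ χ ∈ s0, (2 + 2*(χ y).re) < ∑ _χ ∈ s0, (4:ℝ) := by
        refine Finset.sum_lt_sum (fun χ hχ => (hterm χ hχ y).2) ⟨ch i, hch_mem, ?_⟩
        have : ((ch i) y).re < 1 := hyi
        linarith
      calc r y < ∑ _χ ∈ s0, (4:ℝ) := hlt
        _ = 4 * N := by rw [Finset.sum_const, nsmul_eq_mul, mul_comm]
    have hr1 : r 1 = 4 * N := by
      show ∑ χ ∈ s0, (2 + 2*((χ : G →* ℂ) 1).re) = 4 * N
      have : ∀ χ ∈ s0, (2 + 2*((χ : G →* ℂ) 1).re) = (4:ℝ) := by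
        intro χ _; rw [map_one]; norm_num
      rw [Finset.sum_congr rfl this, Finset.sum_const, nsmul_eq_mul, mul_comm]
    obtain ⟨x0, hx0K, hx0max'⟩ := hKcompact.exists_isMaxOn hKne hrcont.continuousOn
    have hx0max : ∀ y ∈ K, r y ≤ r x0 := fun y hy => hx0max' hy
    set a := r x0 with ha
    have ha0 : 0 ≤ a := hr_nonneg x0
    have haN : a < 4*N := hrK x0 hx0K
    clear_value a
    set a' : ℝ := (a + 4*N)/2 with ha'
    have ha'pos : 0 < a' := by rw [ha']; linarith
    have haa' : a < a' := by rw [ha']; linarith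
    have ha'N : a' < 4*N := by rw [ha']; linarith
    clear_value a'
    set W0 : Set G := {y | a' < r y} with hW0
    have hW0open : IsOpen W0 := isOpen_lt continuous_const hrcont
    have h1W : (1:G) ∈ W0 := by
      simp only [hW0, Set.mem_setOf_eq, hr1]; exact ha'N
    set m := (μ W0).toReal with hm
    have hμW : 0 < m := ENNReal.toReal_pos
      (hW0open.measure_pos μ ⟨1, h1W⟩).ne' (measure_ne_top μ _)
    clear_value m
    obtain ⟨n, hn⟩ := exists_pow_lt_of_lt_one
      (show (0:ℝ) < (ε/2)*m/(B+1) by positivity)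
      (show a/a' < 1 by rw [div_lt_one ha'pos]; exact haa')
    set C := ∫ y, r y ^ n ∂μ with hC
    have hrn_int : Integrable (fun y => r y ^ n) μ :=
      integrable_of_continuous μ (hrcont.pow n)
    have hCge : a'^n * m ≤ C := by
      calc a'^n * m = ∫ _y in W0, a'^n ∂μ := by
            rw [setIntegral_const, smul_eq_mul, measureReal_def, ← hm, mul_comm]
        _ ≤ ∫ y in W0, r y ^ n ∂μ := by
            refine setIntegral_mono_on ((integrable_const _).integrableOn)
              hrn_int.integrableOn hW0open.measurableSet fun y hy => ?_
            exact pow_le_pow_left₀ ha'pos.le (le_of_lt hy) n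
        _ ≤ C := setIntegral_le_integral hrn_int
            (Filter.Eventually.of_forall fun y => pow_nonneg (hr_nonneg y) n)
    have hCpos : 0 < C := lt_of_lt_of_le (mul_pos (pow_pos ha'pos n) hμW) hCge
    clear_value C
    -- representation
    obtain ⟨s, c, hsnice, hrep⟩ := rep_of_mem_span (pow_sum_mem_span s0 hs0nice n)
    have hQr : ∀ g : G, ((r g : ℝ) : ℂ) = ∑ χ ∈ s0, (2 + χ g + (starRingEnd ℂ) (χ g)) := by
      intro g
      rw [hr]
      push_cast
      refine Finset.sum_congr rfl fun χ _ => ?_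
      push_cast
      rw [add_assoc, Complex.add_conj]
      norm_cast
      push_cast
      ring
    have hrep' : ∀ g : G, ((r g ^ n : ℝ) : ℂ) = ∑ χ ∈ s, c χ * χ g := by
      intro g
      have h1 := hrep g
      rw [Pi.pow_apply] at h1
      rw [← h1]
      push_cast
      rw [hQr g]
    refine ⟨s, fun χ => c χ / C, fun g => r g ^ n / C, hsnice, ?_, ?_, ?_, ?_⟩
    · intro g
      push_cast
      rw [← Complex.ofReal_pow, hrep' g, Finset.sum_div]
      exact Finset.sum_congr rfl fun χ _ => (mul_div_right_comm _ _ _)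
    · intro g
      exact div_nonneg (pow_nonneg (hr_nonneg g) n) hCpos.le
    · rw [integral_div, ← hC, div_self hCpos.ne']
    · -- the main estimate
      have hprod_int : Integrable (fun g => r g ^ n * ‖f g‖) μ :=
        integrable_of_continuous μ ((hrcont.pow n).mul habs_cont)
      have hIK : ∫ g in K, r g ^ n * ‖f g‖ ∂μ ≤ a^n * B := by
        calc ∫ g in K, r g ^ n * ‖f g‖ ∂μ
            ≤ ∫ _g in K, a^n * B ∂μ := by
              refine setIntegral_mono_on hprod_int.integrableOn
                ((integrable_const _).integrableOn) hKclosed.measurableSet fun y hy => ?_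
              exact mul_le_mul (pow_le_pow_left₀ (hr_nonneg y) (hx0max y hy) n)
                (hfB y) (norm_nonneg _) (pow_nonneg ha0 n)
          _ = (μ K).toReal * (a^n * B) := by rw [setIntegral_const, smul_eq_mul, measureReal_def]
          _ ≤ 1 * (a^n * B) := by
              refine mul_le_mul_of_nonneg_right ?_ (mul_nonneg (pow_nonneg ha0 n) hB0)
              calc (μ K).toReal ≤ (μ Set.univ).toReal :=
                    ENNReal.toReal_mono (measure_ne_top μ _) (measure_mono (Set.subset_univ _))
                _ = 1 := by simp
          _ = a^n * B := one_mul _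
      have hIKc : ∫ g in Kᶜ, r g ^ n * ‖f g‖ ∂μ ≤ (ε/2) * C := by
        calc ∫ g in Kᶜ, r g ^ n * ‖f g‖ ∂μ
            ≤ ∫ g in Kᶜ, r g ^ n * (ε/2) ∂μ := by
              refine setIntegral_mono_on hprod_int.integrableOn
                ((hrn_int.mul_const _).integrableOn) hKclosed.measurableSet.compl fun y hy => ?_
              refine mul_le_mul_of_nonneg_left ?_ (pow_nonneg (hr_nonneg y) n)
              have : ¬ (ε/2 ≤ ‖f y‖) := hy
              linarith [not_le.1 this]
          _ = (∫ g in Kᶜ, r g ^ n ∂μ) * (ε/2) := integral_mul_const _ _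
          _ ≤ C * (ε/2) := by
              refine mul_le_mul_of_nonneg_right ?_ (le_of_lt (half_pos hε))
              rw [hC]
              exact setIntegral_le_integral hrn_int
                (Filter.Eventually.of_forall fun y => pow_nonneg (hr_nonneg y) n)
          _ = (ε/2) * C := mul_comm _ _
      have hsplit : ∫ g, r g ^ n * ‖f g‖ ∂μ ≤ a^n * B + (ε/2) * C := by
        rw [← integral_add_compl hKclosed.measurableSet hprod_int]
        exact add_le_add hIK hIKc
      have h1 : (∫ g, r g ^ n / C * ‖f g‖ ∂μ)
          = (∫ g, r g ^ n * ‖f g‖ ∂μ) / C := by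
        rw [← integral_div]
        congr 1
        funext g
        ring
      rw [h1]
      have key : a^n * B / C ≤ ε/2 := by
        have e1 : a ^ n ≤ (ε/2) * m / (B+1) * a' ^ n := by
          have h2 := mul_le_mul_of_nonneg_right hn.le (pow_nonneg ha'pos.le n)
          calc a ^ n = (a/a')^n * a'^n := by
                rw [← mul_pow, div_mul_cancel₀ _ ha'pos.ne']
            _ ≤ _ := h2
        have e3 : (ε/2) * m / (B+1) * a'^n * B ≤ (ε/2) * (a'^n * m) := by
          rw [div_mul_eq_mul_div, div_mul_eq_mul_div, div_le_iff₀ (by linarith : (0:ℝ) < B+1)]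
          nlinarith [mul_pos (mul_pos (half_pos hε) hμW) (pow_pos ha'pos n)]
        have e4 : a^n * B ≤ (ε/2) * C := by
          calc a^n * B ≤ (ε/2) * m / (B+1) * a'^n * B :=
                mul_le_mul_of_nonneg_right e1 hB0
            _ ≤ (ε/2) * (a'^n * m) := e3
            _ ≤ (ε/2) * C := mul_le_mul_of_nonneg_left hCge (le_of_lt (half_pos hε))
        calc a^n * B / C ≤ ((ε/2) * C) / C := by
              exact div_le_div_of_nonneg_right e4 hCpos.le
          _ = ε/2 := mul_div_cancel_right₀ _ hCpos.ne'
      calc (∫ g, r g ^ n * ‖f g‖ ∂μ) / C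
          ≤ (a^n * B + (ε/2) * C) / C := by
            exact div_le_div_of_nonneg_right hsplit hCpos.le
        _ = a^n * B / C + ε/2 := by
            rw [add_div, mul_div_cancel_right₀ _ hCpos.ne']
        _ ≤ ε/2 + ε/2 := by linarith [key]
        _ = ε := by ring
end

section
/- Let d ≥ 1 and let l be a continuous length function on the d-torus 𝕌^d, where 𝕌 = {z ∈ ℂ : |z| = 1} with coordinatewise multiplication. Then for every p ∈ ℤ^d there exists a constant C ≥ 0 such that |1 − ω^p| ≤ C·l(ω) for all ω ∈ 𝕌^d, where ω^p = ∏_{i=1}^d ω_i^{p_i}; equivalently, sup{ |1 − ω^p| / l(ω) : ω ∈ 𝕌^d, ω ≠ (1,…,1) } < ∞. -/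
open Real Complex

private lemma aux_norm_sq (θ : ℝ) :
    ‖(1:ℂ) - Complex.exp (θ * Complex.I)‖ ^ 2 = 2 - 2 * Real.cos θ := by
  rw [Complex.exp_mul_I, ← Complex.ofReal_cos, ← Complex.ofReal_sin]
  rw [Complex.sq_norm, Complex.normSq_apply]
  simp only [Complex.sub_re, Complex.sub_im, Complex.one_re, Complex.one_im,
    Complex.add_re, Complex.add_im, Complex.ofReal_re, Complex.ofReal_im,
    Complex.mul_re, Complex.mul_im, Complex.I_re, Complex.I_im]
  nlinarith [Real.sin_sq_add_cos_sq θ]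

/-- For any continuous length function `l` on the `d`-torus `𝕌^d` and any `p ∈ ℤ^d`,
there is a constant `C ≥ 0` with `|1 − ω^p| ≤ C · l(ω)` for all `ω ∈ 𝕌^d`. -/
theorem stmt17 (d : ℕ) (hd : 1 ≤ d)
    (l : (Fin d → Circle) → ℝ) (hcont : Continuous l)
    (hnonneg : ∀ x, 0 ≤ l x)
    (hsub : ∀ x y, l (x * y) ≤ l x + l y)
    (hinv : ∀ x, l x⁻¹ = l x)
    (hzero : ∀ x, l x = 0 ↔ x = 1)
    (p : Fin d → ℤ) :
    ∃ C : ℝ, 0 ≤ C ∧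
      ∀ ω : Fin d → Circle, ‖(1 : ℂ) - ∏ i, ((ω i : ℂ) ^ (p i))‖ ≤ C * l ω := by
  classical
  have pi_pos := Real.pi_pos
  -- coercion lemmas
  have coe_pow : ∀ (z : Circle) (m : ℕ), ((z ^ m : Circle) : ℂ) = (z : ℂ) ^ m := by
    intro z m
    induction m with
    | zero => simp
    | succ k ih => rw [pow_succ, pow_succ, Circle.coe_mul, ih]
  have coe_zpow : ∀ (z : Circle) (n : ℤ), ((z ^ n : Circle) : ℂ) = (z : ℂ) ^ n := by
    intro z n
    cases n with
    | ofNat m => simpa [zpow_natCast] using coe_pow z m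
    | negSucc m => rw [zpow_negSucc, zpow_negSucc, Circle.coe_inv, coe_pow]
  set χ : (Fin d → Circle) → Circle := fun ω => ∏ i, ω i ^ p i with hχdef
  have hχcoe : ∀ ω, ((χ ω : Circle) : ℂ) = ∏ i, ((ω i : ℂ) ^ (p i)) := by
    intro ω
    calc ((∏ i, ω i ^ p i : Circle) : ℂ) = ∏ i, ((ω i ^ p i : Circle) : ℂ) :=
          map_prod Circle.coeHom _ _
      _ = ∏ i, ((ω i : ℂ) ^ (p i)) := Finset.prod_congr rfl fun i _ => coe_zpow _ _
  have hχexp : ∀ ω, (χ ω : ℂ) = Complex.exp ((Complex.arg (χ ω) : ℂ) * Complex.I) := by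
    intro ω
    conv_lhs => rw [← Complex.norm_mul_exp_arg_mul_I ((χ ω : Circle) : ℂ)]
    rw [Circle.norm_coe, Complex.ofReal_one, one_mul]
  have hχpow : ∀ (ω : Fin d → Circle) (n : ℕ), χ (ω ^ n) = (χ ω) ^ n := by
    intro ω n
    simp only [hχdef]
    rw [← Finset.prod_pow]
    refine Finset.prod_congr rfl fun i _ => ?_
    rw [Pi.pow_apply, ← zpow_natCast (ω i) n, ← zpow_mul, mul_comm, zpow_mul, zpow_natCast]
  have hχinv : ∀ ω : Fin d → Circle, χ ω⁻¹ = (χ ω)⁻¹ := by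
    intro ω
    simp only [hχdef]
    rw [← Finset.prod_inv_distrib]
    exact Finset.prod_congr rfl fun i _ => by rw [Pi.inv_apply, inv_zpow]
  have hl1 : l 1 = 0 := (hzero 1).2 rfl
  have hlpow : ∀ (x : Fin d → Circle) (n : ℕ), l (x ^ n) ≤ n * l x := by
    intro x n
    induction n with
    | zero => simp [hl1]
    | succ k ih =>
      rw [pow_succ]
      calc l (x ^ k * x) ≤ l (x ^ k) + l x := hsub _ _
        _ ≤ k * l x + l x := by linarith
        _ = (k + 1 : ℕ) * l x := by push_cast; ring
  -- arg of nontrivial circle element is nonzero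
  have hargne : ∀ z : Circle, Complex.arg (z : ℂ) = 0 → z = 1 := by
    intro z h0
    have h := Complex.norm_mul_exp_arg_mul_I ((z : Circle) : ℂ)
    rw [h0, Circle.norm_coe] at h
    simp only [Complex.ofReal_zero, zero_mul, Complex.exp_zero, Complex.ofReal_one,
      one_mul] at h
    exact Circle.coe_injective (h.symm.trans Circle.coe_one.symm)
  -- Key lemma A
  have keyA : ∀ ω : Fin d → Circle, 0 < Complex.arg (χ ω) →
      ∃ n : ℕ, 1 ≤ n ∧ 1 ≤ ‖(1 : ℂ) - (χ (ω ^ n) : ℂ)‖ ∧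
        (n : ℝ) * Complex.arg (χ ω) ≤ 3 * π / 2 := by
    intro ω hθpos
    set θ := Complex.arg (χ ω) with hθdef
    have hθle : θ ≤ π := Complex.arg_le_pi _
    refine ⟨⌈π / (2 * θ)⌉₊, ?_, ?_, ?_⟩
    · exact Nat.one_le_ceil_iff.2 (by positivity)
    · set n := ⌈π / (2 * θ)⌉₊ with hndef
      have hn1 : π / (2 * θ) ≤ (n : ℝ) := Nat.le_ceil _
      have hn2 : (n : ℝ) < π / (2 * θ) + 1 := Nat.ceil_lt_add_one (by positivity)
      have hlo : π / 2 ≤ (n : ℝ) * θ := by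
        rw [div_le_iff₀ (by positivity)] at hn1
        nlinarith
      have hhi : (n : ℝ) * θ ≤ π + π / 2 := by
        nlinarith [mul_lt_mul_of_pos_right hn2 hθpos,
          div_mul_cancel₀ π (by positivity : (2 * θ) ≠ 0)]
      have hcos : Real.cos ((n : ℝ) * θ) ≤ 0 :=
        Real.cos_nonpos_of_pi_div_two_le_of_le hlo hhi
      have hcoe : (χ (ω ^ n) : ℂ) = Complex.exp ((((n : ℝ) * θ : ℝ) : ℂ) * Complex.I) := by
        rw [hχpow, coe_pow, hχexp, ← Complex.exp_nat_mul]
        push_cast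
        rw [← hθdef]
        ring_nf
      have hsq : ‖(1 : ℂ) - (χ (ω ^ n) : ℂ)‖ ^ 2 = 2 - 2 * Real.cos ((n : ℝ) * θ) := by
        rw [hcoe]; exact aux_norm_sq _
      nlinarith [norm_nonneg ((1 : ℂ) - (χ (ω ^ n) : ℂ))]
    · have hn2 : (⌈π / (2 * θ)⌉₊ : ℝ) < π / (2 * θ) + 1 := Nat.ceil_lt_add_one (by positivity)
      nlinarith [mul_lt_mul_of_pos_right hn2 hθpos,
        div_mul_cancel₀ π (by positivity : (2 * θ) ≠ 0)]
  -- trivial case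
  by_cases htriv : ∀ ω : Fin d → Circle, χ ω = 1
  · refine ⟨0, le_refl 0, fun ω => ?_⟩
    rw [← hχcoe, htriv ω]
    simp [hnonneg ω]
  push_neg at htriv
  obtain ⟨ω₀, hω₀⟩ := htriv
  -- the compact set K
  set K : Set (Fin d → Circle) := {ω | 1 ≤ ‖(1 : ℂ) - (χ ω : ℂ)‖} with hKdef
  have hχcont' : Continuous χ := by
    rw [hχdef]
    exact continuous_finset_prod _ fun i _ =>
      (continuous_zpow (p i)).comp (continuous_apply i)
  have hχcont : Continuous fun ω : Fin d → Circle => ((χ ω : Circle) : ℂ) :=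
    continuous_induced_dom.comp hχcont'
  have hKclosed : IsClosed K :=
    isClosed_le continuous_const ((continuous_const.sub hχcont).norm)
  have hKcompact : IsCompact K := hKclosed.isCompact
  -- K is nonempty
  have hKne : K.Nonempty := by
    rcases lt_trichotomy (Complex.arg (χ ω₀)) 0 with hneg | hzer | hpos
    · have hargpos : 0 < Complex.arg (χ ω₀⁻¹) := by
        rw [hχinv, Circle.coe_inv, Complex.arg_inv]
        rw [if_neg (by intro h; rw [h] at hneg; linarith)]
        linarith
      obtain ⟨n, _, hn, _⟩ := keyA ω₀⁻¹ hargpos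
      exact ⟨ω₀⁻¹ ^ n, hn⟩
    · exact absurd (hargne _ hzer) hω₀
    · obtain ⟨n, _, hn, _⟩ := keyA ω₀ hpos
      exact ⟨ω₀ ^ n, hn⟩
  -- minimum of l on K
  obtain ⟨ω₁, hω₁K, hω₁min⟩ := hKcompact.exists_isMinOn hKne hcont.continuousOn
  set ε := l ω₁ with hεdef
  have hεpos : 0 < ε := by
    have hne : ω₁ ≠ 1 := by
      intro h1
      have hc1 : (χ ω₁ : ℂ) = 1 := by rw [h1, hχdef]; simp
      have hK1 := hω₁K
      simp only [hKdef, Set.mem_setOf_eq, hc1, sub_self, norm_zero] at hK1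
      linarith
    rcases (hnonneg ω₁).lt_or_eq with h | h
    · exact h
    · exact absurd ((hzero ω₁).1 h.symm) hne
  have hεK : ∀ ω ∈ K, ε ≤ l ω := fun ω hω => isMinOn_iff.1 hω₁min ω hω
  -- the constant
  refine ⟨3 * π / (2 * ε), by positivity, ?_⟩
  -- key bound for positive arg
  have keyB : ∀ ω : Fin d → Circle, 0 < Complex.arg (χ ω) →
      ‖(1 : ℂ) - (χ ω : ℂ)‖ ≤ 3 * π / (2 * ε) * l ω := by
    intro ω hθpos
    set θ := Complex.arg (χ ω) with hθdef
    have hθle : θ ≤ π := Complex.arg_le_pi _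
    obtain ⟨n, hn1, hnK, hnθ⟩ := keyA ω hθpos
    have hεn : ε ≤ (n : ℝ) * l ω := le_trans (hεK _ hnK) (hlpow ω n)
    have hnorm : ‖(1 : ℂ) - (χ ω : ℂ)‖ ≤ θ := by
      have hsq : ‖(1 : ℂ) - (χ ω : ℂ)‖ ^ 2 = 2 - 2 * Real.cos θ := by
        rw [hχexp]; exact aux_norm_sq _
      nlinarith [norm_nonneg ((1 : ℂ) - (χ ω : ℂ)), Real.one_sub_sq_div_two_le_cos (x := θ)]
    have hnpos : (0 : ℝ) < n := by exact_mod_cast hn1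
    have key : θ ≤ 3 * π / (2 * ε) * l ω := by
      rw [div_mul_eq_mul_div, le_div_iff₀ (by positivity)]
      nlinarith [mul_le_mul_of_nonneg_left hεn (le_of_lt hθpos),
        mul_le_mul_of_nonneg_right hnθ (hnonneg ω)]
    linarith
  intro ω
  rw [← hχcoe]
  rcases lt_trichotomy (Complex.arg (χ ω)) 0 with hneg | hzer | hpos
  · have hargpos : 0 < Complex.arg (χ ω⁻¹) := by
      rw [hχinv, Circle.coe_inv, Complex.arg_inv]
      rw [if_neg (by intro h; rw [h] at hneg; linarith)]
      linarith
    have h := keyB ω⁻¹ hargpos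
    rw [hinv ω] at h
    have hconj : ‖(1 : ℂ) - (χ ω⁻¹ : ℂ)‖ = ‖(1 : ℂ) - (χ ω : ℂ)‖ := by
      rw [hχinv, Circle.coe_inv_eq_conj]
      rw [show (1 : ℂ) - (starRingEnd ℂ) (χ ω : ℂ) =
        (starRingEnd ℂ) ((1 : ℂ) - (χ ω : ℂ)) by rw [map_sub, map_one]]
      exact RCLike.norm_conj _
    rw [hconj] at h
    exact h
  · rw [hargne _ hzer]
    simp only [Circle.coe_one, sub_self, norm_zero]
    exact mul_nonneg (by positivity) (hnonneg ω)
  · exact keyB ω hpos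
end

section
/- Let G be a compact Hausdorff topological group, let ρ be a metric on G inducing the topology of G, and let λ be the Haar probability measure on G. Then the function l : G → ℝ defined by l(x) = ∫_G ρ(gx, g) dλ(g) is a continuous length function on G: l is continuous, l(xy) ≤ l(x) + l(y) for all x,y ∈ G, l(x⁻¹) = l(x) for all x ∈ G, and l(x) = 0 if and only if x is the identity element of G. -/
open MeasureTheory

/-- For a compact metrizable group `G` with Haar probability measure `μ`, the function
`l(x) = ∫ dist(gx, g) dμ(g)` is a continuous length function on `G`. -/
theorem stmt18 {G : Type*} [Group G] [MetricSpace G] [IsTopologicalGroup G]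
    [CompactSpace G] [MeasurableSpace G] [BorelSpace G]
    (μ : Measure G) [μ.IsHaarMeasure] [IsProbabilityMeasure μ]
    (l : G → ℝ) (hl : ∀ x, l x = ∫ g, dist (g * x) g ∂μ) :
    Continuous l ∧
    (∀ x y : G, l (x * y) ≤ l x + l y) ∧
    (∀ x : G, l x⁻¹ = l x) ∧
    (∀ x : G, l x = 0 ↔ x = 1) := by
  -- right invariance of the Haar measure on a compact group
  have hRI : μ.IsMulRightInvariant := by
    constructor
    intro g
    have hmg : Measurable (· * g : G → G) := measurable_mul_const g
    have hleft : (μ.map (· * g)).IsMulLeftInvariant := by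
      constructor
      intro h
      rw [Measure.map_map (measurable_const_mul h) hmg]
      have : ((h * ·) ∘ (· * g) : G → G) = ((· * g) ∘ (h * ·)) := by
        funext z; simp [mul_assoc]
      rw [this, ← Measure.map_map hmg (measurable_const_mul h),
        MeasureTheory.map_mul_left_eq_self]
    have hprob : IsProbabilityMeasure (μ.map (· * g)) :=
      Measure.isProbabilityMeasure_map hmg.aemeasurable
    have := Measure.isMulInvariant_eq_smul_of_compactSpace (μ.map (· * g)) μ
    have huniv := congrArg (fun ν : Measure G => ν Set.univ) this
    simp only [measure_univ, Measure.smul_apply, smul_eq_mul, mul_one,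
      ENNReal.smul_def] at huniv
    have hc1 : (Measure.map (· * g) μ).haarScalarFactor μ = 1 :=
      ENNReal.coe_eq_one.mp huniv.symm
    rw [this, hc1, one_smul]
  -- integrability of the integrands
  have hint : ∀ x : G, Integrable (fun g => dist (g * x) g) μ := fun x =>
    ((continuous_mul_right x).dist continuous_id).integrable_of_hasCompactSupport
      (HasCompactSupport.of_compactSpace _)
  refine ⟨?_, ?_, ?_, ?_⟩
  · -- continuity
    have hc : Continuous (Function.uncurry fun (x : G) (g : G) => dist (g * x) g) := by
      fun_prop
    have := continuous_parametric_integral_of_continuous (μ := μ)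
      (f := fun (x : G) (g : G) => dist (g * x) g) hc isCompact_univ
    have heq : l = fun x => ∫ g in Set.univ, dist (g * x) g ∂μ := by
      funext x; rw [hl x, setIntegral_univ]
    rw [heq]
    exact this
  · -- subadditivity
    intro x y
    have key : ∫ g, dist (g * x * y) (g * x) ∂μ = l y := by
      rw [hl y]
      exact integral_mul_right_eq_self (fun g => dist (g * y) g) x
    rw [hl (x * y), hl x]
    calc ∫ g, dist (g * (x * y)) g ∂μ
        ≤ ∫ g, (dist (g * x * y) (g * x) + dist (g * x) g) ∂μ := by
          apply integral_mono (by simpa [mul_assoc] using hint (x * y))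
            (((hint y).comp_mul_right x).add (hint x))
          intro g
          simpa [mul_assoc] using dist_triangle (g * (x * y)) (g * x) g
      _ = (∫ g, dist (g * x * y) (g * x) ∂μ) + ∫ g, dist (g * x) g ∂μ :=
          integral_add ((hint y).comp_mul_right x) (hint x)
      _ = l y + ∫ g, dist (g * x) g ∂μ := by rw [key]
      _ = (∫ g, dist (g * x) g ∂μ) + l y := add_comm _ _
  · -- symmetry
    intro x
    rw [hl x⁻¹, hl x]
    have := integral_mul_right_eq_self (μ := μ) (fun g => dist (g * x⁻¹) g) x
    rw [← this]
    simp [dist_comm]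
  · -- positivity
    intro x
    constructor
    · intro hx
      have hnn : 0 ≤ fun g : G => dist (g * x) g := fun g => dist_nonneg
      have h0 : (fun g : G => dist (g * x) g) =ᵐ[μ] 0 :=
        (integral_eq_zero_iff_of_nonneg hnn (hint x)).mp ((hl x).symm.trans hx)
      have : (fun g : G => dist (g * x) g) = (0 : G → ℝ) :=
        (Continuous.ae_eq_iff_eq μ
          ((continuous_mul_right x).dist continuous_id) continuous_const).mp h0
      have h1 : dist ((1 : G) * x) 1 = 0 := by
        have := congrFun this 1; simpa using this
      rw [one_mul] at h1
      exact dist_eq_zero.mp h1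
    · intro hx
      rw [hx, hl 1]
      simp
end
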